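/- arXiv:2202.10717 — 8 statements merged into one kernel-verified Lean document; each statement's English description precedes it below -/
import Mathlib

section
/- The hockey-stick contraction coefficient is attained on orthogonal pure states: for any quantum channel N acting on a system of dimension at least 2 and any γ ≥ 1, η_γ(N) = sup over pairs of orthogonal unit vectors |φ⟩ ⊥ |ψ⟩ of E_γ(N(|φ⟩⟨φ|) ‖ N(|ψ⟩⟨ψ|)). -/
open scoped BigOperators ComplexOrder

/-- Trace of the positive part of a Hermitian matrix (0 if not Hermitian). -/
noncomputable def posPartTrace {n : Type*} [Fintype n] [DecidableEq n]
    (X : Matrix n n ℂ) : ℝ :=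
  if h : X.IsHermitian then ∑ i, max (h.eigenvalues i) 0 else 0

/-- The quantum hockey-stick divergence `E_γ(ρ‖σ) = Tr[(ρ - γσ)₊]`. -/
noncomputable def hsDiv {n : Type*} [Fintype n] [DecidableEq n]
    (γ : ℝ) (ρ σ : Matrix n n ℂ) : ℝ :=
  posPartTrace (ρ - (γ : ℂ) • σ)

/-- A density operator: positive semidefinite with unit trace. -/
def IsDensity {n : Type*} [Fintype n] [DecidableEq n] (ρ : Matrix n n ℂ) : Prop :=
  ρ.PosSemidef ∧ ρ.trace = 1

/-- Trace norm: the sum of the singular values. -/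
noncomputable def traceNorm {n : Type*} [Fintype n] [DecidableEq n]
    (X : Matrix n n ℂ) : ℝ :=
  ∑ i, Real.sqrt ((Matrix.posSemidef_conjTranspose_mul_self X).isHermitian.eigenvalues i)

/-- Completely positive trace-preserving linear map. -/
def IsCPTP {n m : Type*} [Fintype n] [DecidableEq n] [Fintype m] [DecidableEq m]
    (Φ : Matrix n n ℂ →ₗ[ℂ] Matrix m m ℂ) : Prop :=
  (∀ k : ℕ, ∀ X : Matrix (Fin k × n) (Fin k × n) ℂ, X.PosSemidef →
      (Matrix.of fun p q : Fin k × m =>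
        Φ (Matrix.of fun i j => X (p.1, i) (q.1, j)) p.2 q.2).PosSemidef) ∧
  (∀ X, (Φ X).trace = X.trace)

/-- Contraction coefficient of a channel for the hockey-stick divergence. -/
noncomputable def contractionCoeff {n : Type*} [Fintype n] [DecidableEq n]
    (γ : ℝ) (Φ : Matrix n n ℂ →ₗ[ℂ] Matrix n n ℂ) : ℝ :=
  sSup {x : ℝ | ∃ ρ σ : Matrix n n ℂ, IsDensity ρ ∧ IsDensity σ ∧
    0 < hsDiv γ ρ σ ∧ x = hsDiv γ (Φ ρ) (Φ σ) / hsDiv γ ρ σ}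

section Aux
open Matrix
set_option linter.unusedSectionVars false
set_option linter.unusedVariables false

variable {n : Type*} [Fintype n] [DecidableEq n]

/-- rank-one matrix -/
def pureMat (v : n → ℂ) : Matrix n n ℂ := Matrix.of fun i j => v i * star (v j)

lemma pureMat_posSemidef (v : n → ℂ) : (pureMat v).PosSemidef := by
  rw [Matrix.posSemidef_iff_dotProduct_mulVec]
  constructor
  · ext i j
    simp [pureMat, Matrix.conjTranspose_apply, mul_comm]
  · intro x
    have : dotProduct (star x) (pureMat v *ᵥ x)
        = star (dotProduct (star v) x) * (dotProduct (star v) x) := by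
      simp only [dotProduct, Matrix.mulVec, pureMat, Matrix.of_apply, Pi.star_apply,
        star_sum, star_mul', star_star, Finset.mul_sum, Finset.sum_mul]
      rw [Finset.sum_comm]
      congr 1; ext i; congr 1; ext j; ring
    rw [this]
    exact star_mul_self_nonneg _

lemma trace_mul_pureMat (T : Matrix n n ℂ) (v : n → ℂ) :
    (T * pureMat v).trace = dotProduct (star v) (T *ᵥ v) := by
  simp only [Matrix.trace, Matrix.diag, Matrix.mul_apply, pureMat, Matrix.of_apply,
    dotProduct, Matrix.mulVec, Pi.star_apply, Finset.mul_sum]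
  congr 1; ext i; congr 1; ext j; ring

lemma trace_pureMat (v : n → ℂ) : (pureMat v).trace = dotProduct (star v) v := by
  simp [Matrix.trace, Matrix.diag, pureMat, dotProduct, mul_comm]

/-- k-th column of the eigenvector unitary. -/
noncomputable def eigCol {X : Matrix n n ℂ} (hX : X.IsHermitian) (k : n) : n → ℂ :=
  fun i => (hX.eigenvectorUnitary : Matrix n n ℂ) i k

lemma eigCol_orth {X : Matrix n n ℂ} (hX : X.IsHermitian) (k l : n) :
    dotProduct (star (eigCol hX k)) (eigCol hX l) = if k = l then 1 else 0 := by
  have h := (Matrix.mem_unitaryGroup_iff'.mp hX.eigenvectorUnitary.2)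
  have := congrFun (congrFun h k) l
  simpa [Matrix.mul_apply, Matrix.one_apply, dotProduct, eigCol,
    Matrix.conjTranspose_apply] using this

lemma sum_pureMat_eigCol {X : Matrix n n ℂ} (hX : X.IsHermitian) :
    ∑ k, pureMat (eigCol hX k) = 1 := by
  have h := (Matrix.mem_unitaryGroup_iff.mp hX.eigenvectorUnitary.2)
  ext i j
  have := congrFun (congrFun h i) j
  simpa [Matrix.mul_apply, Matrix.one_apply, pureMat, eigCol, Matrix.sum_apply,
    Matrix.conjTranspose_apply] using this

lemma rankOne_decomposition {X : Matrix n n ℂ} (hX : X.IsHermitian) :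
    X = ∑ k, (hX.eigenvalues k : ℂ) • pureMat (eigCol hX k) := by
  conv_lhs => rw [hX.spectral_theorem, Unitary.conjStarAlgAut_apply,
    Matrix.star_eq_conjTranspose]
  ext i j
  simp only [Matrix.mul_apply, Matrix.sum_apply, Matrix.smul_apply, pureMat, Matrix.of_apply,
    Matrix.diagonal_apply, Matrix.conjTranspose_apply, eigCol, Function.comp_apply, smul_eq_mul]
  congr 1; ext k
  rw [Finset.sum_eq_single k (by intro b _ hb; simp [hb]) (by simp)]
  simp only [if_pos rfl, if_true, Matrix.star_apply]
  rw [mul_right_comm]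
  exact (mul_comm _ _)

lemma smul_posSemidef {c : ℝ} (hc : 0 ≤ c) {M : Matrix n n ℂ} (hM : M.PosSemidef) :
    ((c : ℂ) • M).PosSemidef := by
  rw [Matrix.posSemidef_iff_dotProduct_mulVec]
  constructor
  · ext i j
    have := congrFun (congrFun hM.isHermitian.eq i) j
    simp only [Matrix.conjTranspose_apply, Matrix.smul_apply, smul_eq_mul, star_mul',
      Complex.star_def, Complex.conj_ofReal] at *
    rw [this]
  · intro x
    rw [Matrix.smul_mulVec, dotProduct_smul]
    exact smul_nonneg (by exact_mod_cast Complex.zero_le_real.mpr hc) (hM.dotProduct_mulVec_nonneg x)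

lemma smul_isHermitian {c : ℝ} {M : Matrix n n ℂ} (hM : M.IsHermitian) :
    ((c : ℂ) • M).IsHermitian := by
  ext i j
  have := congrFun (congrFun hM.eq i) j
  simp only [Matrix.conjTranspose_apply, Matrix.smul_apply, smul_eq_mul, star_mul',
    Complex.star_def, Complex.conj_ofReal] at *
  rw [this]

lemma sum_smul_posSemidef {ι : Type*} (s : Finset ι) (c : ι → ℝ) (hc : ∀ i ∈ s, 0 ≤ c i)
    (M : ι → Matrix n n ℂ) (hM : ∀ i ∈ s, (M i).PosSemidef) :
    (∑ i ∈ s, (c i : ℂ) • M i).PosSemidef := by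
  classical
  induction s using Finset.induction_on with
  | empty => simpa using Matrix.PosSemidef.zero
  | insert _ _ h ih =>
    rw [Finset.sum_insert h]
    exact Matrix.PosSemidef.add (smul_posSemidef (hc _ (by simp)) (hM _ (by simp)))
      (ih (fun i hi => hc _ (by simp [hi])) (fun i hi => hM _ (by simp [hi])))

lemma sum_smul_isHermitian {ι : Type*} (s : Finset ι) (c : ι → ℝ)
    (M : ι → Matrix n n ℂ) (hM : ∀ i ∈ s, (M i).IsHermitian) :
    (∑ i ∈ s, (c i : ℂ) • M i).IsHermitian := by
  classical
  induction s using Finset.induction_on with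
  | empty => simp [Matrix.isHermitian_zero]
  | insert _ _ h ih =>
    rw [Finset.sum_insert h]
    exact (smul_isHermitian (hM _ (by simp))).add (ih (fun i hi => hM _ (by simp [hi])))

lemma var_le {T Z : Matrix n n ℂ} (hT : T.PosSemidef) (hT1 : (1 - T).PosSemidef)
    (hZ : Z.IsHermitian) : ((T * Z).trace).re ≤ posPartTrace Z := by
  rw [posPartTrace, dif_pos hZ]
  conv_lhs => rw [rankOne_decomposition hZ]
  rw [Matrix.mul_sum]
  simp only [Matrix.mul_smul, Matrix.trace_sum, Matrix.trace_smul]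
  rw [Complex.re_sum]
  apply Finset.sum_le_sum
  intro k _
  have htr : (T * pureMat (eigCol hZ k)).trace
      = dotProduct (star (eigCol hZ k)) (T *ᵥ (eigCol hZ k)) :=
    trace_mul_pureMat T _
  set t : ℝ := ((T * pureMat (eigCol hZ k)).trace).re with ht
  have ht0 : 0 ≤ t := by
    rw [ht, htr]; exact hT.re_dotProduct_nonneg _
  have ht1 : t ≤ 1 := by
    have h0 := hT1.re_dotProduct_nonneg (eigCol hZ k)
    rw [Matrix.sub_mulVec, Matrix.one_mulVec, dotProduct_sub] at h0
    have hvv : dotProduct (star (eigCol hZ k)) (eigCol hZ k) = 1 := by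
      simpa using eigCol_orth hZ k k
    rw [hvv] at h0
    simp only [map_sub, RCLike.one_re] at h0
    rw [ht, htr]
    have hre : RCLike.re (dotProduct (star (eigCol hZ k)) (T *ᵥ eigCol hZ k))
        = (dotProduct (star (eigCol hZ k)) (T *ᵥ eigCol hZ k)).re := rfl
    rw [hre] at h0
    linarith
  rw [smul_eq_mul, Complex.re_ofReal_mul]
  rcases le_or_gt (hZ.eigenvalues k) 0 with h | h
  · calc hZ.eigenvalues k * t ≤ 0 := mul_nonpos_of_nonpos_of_nonneg h ht0
    _ ≤ max (hZ.eigenvalues k) 0 := le_max_right _ _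
  · calc hZ.eigenvalues k * t ≤ hZ.eigenvalues k * 1 :=
        mul_le_mul_of_nonneg_left ht1 h.le
    _ = hZ.eigenvalues k := mul_one _
    _ ≤ max (hZ.eigenvalues k) 0 := le_max_left _ _

lemma pureMat_mulVec (u w : n → ℂ) :
    pureMat u *ᵥ w = (dotProduct (star u) w) • u := by
  ext i
  simp only [Matrix.mulVec, dotProduct, pureMat, Matrix.of_apply, Pi.smul_apply,
    Pi.star_apply, smul_eq_mul, Finset.sum_mul, Finset.mul_sum]
  congr 1; ext j; ring

lemma trace_pureMat_mul_pureMat (u w : n → ℂ) :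
    (pureMat u * pureMat w).trace
      = (dotProduct (star u) w) * (dotProduct (star w) u) := by
  rw [trace_mul_pureMat, pureMat_mulVec]
  simp only [dotProduct_smul, smul_eq_mul]

lemma exists_opt {Z : Matrix n n ℂ} (hZ : Z.IsHermitian) :
    ∃ T : Matrix n n ℂ, T.PosSemidef ∧ (1 - T).PosSemidef ∧
      ((T * Z).trace).re = posPartTrace Z := by
  classical
  set c : n → ℝ := fun k => if 0 < hZ.eigenvalues k then 1 else 0 with hc
  refine ⟨∑ k, (c k : ℂ) • pureMat (eigCol hZ k), ?_, ?_, ?_⟩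
  · exact sum_smul_posSemidef _ _ (fun k _ => by positivity)
      _ (fun k _ => pureMat_posSemidef _)
  · have h1 : (1 : Matrix n n ℂ) = ∑ k, pureMat (eigCol hZ k) :=
      (sum_pureMat_eigCol hZ).symm
    have : (1 : Matrix n n ℂ) - ∑ k, (c k : ℂ) • pureMat (eigCol hZ k)
        = ∑ k, ((1 - c k : ℝ) : ℂ) • pureMat (eigCol hZ k) := by
      rw [h1, ← Finset.sum_sub_distrib]
      congr 1; ext k; push_cast; rw [sub_smul, one_smul]
    rw [this]
    refine sum_smul_posSemidef _ _ (fun k _ => ?_) _ (fun k _ => pureMat_posSemidef _)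
    have hck : c k = if 0 < hZ.eigenvalues k then 1 else 0 := rfl
    rw [hck]; split <;> norm_num
  · rw [posPartTrace, dif_pos hZ]
    have h2 : (∑ k, (c k : ℂ) • pureMat (eigCol hZ k)) * Z
        = (∑ k, (c k : ℂ) • pureMat (eigCol hZ k))
          * (∑ l, (hZ.eigenvalues l : ℂ) • pureMat (eigCol hZ l)) :=
      congrArg (fun W => (∑ k, (c k : ℂ) • pureMat (eigCol hZ k)) * W)
        (rankOne_decomposition hZ)
    rw [h2, Matrix.sum_mul]
    simp only [Matrix.mul_sum, Matrix.smul_mul, Matrix.mul_smul, Matrix.trace_sum,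
      Matrix.trace_smul, smul_eq_mul]
    have htr : ∀ k l, (pureMat (eigCol hZ k) * pureMat (eigCol hZ l)).trace
        = if k = l then 1 else 0 := by
      intro k l
      rw [trace_pureMat_mul_pureMat, eigCol_orth, eigCol_orth]
      by_cases h : k = l
      · subst h; simp
      · simp [h, Ne.symm h]
    have : ∀ k, ∑ l, (hZ.eigenvalues l : ℂ) *
        ((c k : ℂ) * (pureMat (eigCol hZ k) * pureMat (eigCol hZ l)).trace)
        = (c k : ℂ) * (hZ.eigenvalues k : ℂ) := by
      intro k
      rw [Finset.sum_eq_single k]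
      · rw [htr]; simp [mul_comm]
      · intro l _ hl; rw [htr]; simp [Ne.symm hl]
      · simp
    rw [Finset.sum_congr rfl (fun k _ => this k)]
    have : (∑ k, (c k : ℂ) * (hZ.eigenvalues k : ℂ)) =
        ((∑ k, c k * hZ.eigenvalues k : ℝ) : ℂ) := by push_cast; ring
    rw [this, Complex.ofReal_re]
    congr 1; ext k
    rw [hc]
    rcases lt_or_ge 0 (hZ.eigenvalues k) with h | h
    · simp [h, max_eq_left h.le]
    · simp [not_lt.mpr h, max_eq_right h]

lemma trace_mul_psd_re_nonneg {T S : Matrix n n ℂ} (hT : T.PosSemidef) (hS : S.PosSemidef) :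
    0 ≤ ((T * S).trace).re := by
  have h2 : T * S = ∑ k, (hS.isHermitian.eigenvalues k : ℂ) •
      (T * pureMat (eigCol hS.isHermitian k)) := by
    calc T * S = T * ∑ k, (hS.isHermitian.eigenvalues k : ℂ) • pureMat (eigCol hS.isHermitian k) :=
          congrArg (fun W => T * W) (rankOne_decomposition hS.isHermitian)
    _ = _ := by rw [Matrix.mul_sum]; simp only [Matrix.mul_smul]
  rw [h2, Matrix.trace_sum]
  simp only [Matrix.trace_smul, smul_eq_mul]
  rw [Complex.re_sum]
  apply Finset.sum_nonneg
  intro k _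
  rw [Complex.re_ofReal_mul]
  apply mul_nonneg (hS.eigenvalues_nonneg k)
  rw [trace_mul_pureMat]
  exact hT.re_dotProduct_nonneg _

lemma posPartTrace_mono {X Y : Matrix n n ℂ} (hX : X.IsHermitian) (hY : Y.IsHermitian)
    (h : (Y - X).PosSemidef) : posPartTrace X ≤ posPartTrace Y := by
  obtain ⟨T, hT, hT1, hTX⟩ := exists_opt hX
  have key : ((T * X).trace).re ≤ ((T * Y).trace).re := by
    have : T * Y = T * X + T * (Y - X) := by rw [← Matrix.mul_add, add_sub_cancel]
    rw [this, Matrix.trace_add, Complex.add_re]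
    have := trace_mul_psd_re_nonneg hT h
    linarith
  calc posPartTrace X = ((T * X).trace).re := hTX.symm
  _ ≤ ((T * Y).trace).re := key
  _ ≤ posPartTrace Y := var_le hT hT1 hY

lemma posPartTrace_sum_le {ι : Type*} (s : Finset ι) (c : ι → ℝ) (hc : ∀ i ∈ s, 0 ≤ c i)
    (X : ι → Matrix n n ℂ) (hX : ∀ i ∈ s, (X i).IsHermitian) :
    posPartTrace (∑ i ∈ s, (c i : ℂ) • X i) ≤ ∑ i ∈ s, c i * posPartTrace (X i) := by
  have hZ : (∑ i ∈ s, (c i : ℂ) • X i).IsHermitian := sum_smul_isHermitian s c X hX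
  obtain ⟨T, hT, hT1, hTX⟩ := exists_opt hZ
  rw [← hTX, Matrix.mul_sum]
  simp only [Matrix.mul_smul, Matrix.trace_sum, Matrix.trace_smul, smul_eq_mul]
  rw [Complex.re_sum]
  apply Finset.sum_le_sum
  intro i hi
  rw [Complex.re_ofReal_mul]
  exact mul_le_mul_of_nonneg_left (var_le hT hT1 (hX i hi)) (hc i hi)

lemma trace_eq_sum_eigenvalues {Z : Matrix n n ℂ} (hZ : Z.IsHermitian) :
    Z.trace = ∑ k, (hZ.eigenvalues k : ℂ) := by
  conv_lhs => rw [rankOne_decomposition hZ]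
  rw [Matrix.trace_sum]
  congr 1; ext k
  rw [Matrix.trace_smul, trace_pureMat]
  have h := eigCol_orth hZ k k
  simp only [if_pos rfl, if_true] at h
  rw [h, smul_eq_mul, mul_one]

lemma posPartTrace_psd {S : Matrix n n ℂ} (hS : S.PosSemidef) :
    posPartTrace S = S.trace.re := by
  rw [posPartTrace, dif_pos hS.isHermitian, trace_eq_sum_eigenvalues hS.isHermitian,
    Complex.re_sum]
  congr 1; ext k
  rw [Complex.ofReal_re, max_eq_left (hS.eigenvalues_nonneg k)]

lemma cptp_posSemidef {m : Type*} [Fintype m] [DecidableEq m]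
    (Φ : Matrix n n ℂ →ₗ[ℂ] Matrix m m ℂ) (hΦ : IsCPTP Φ)
    {ρ : Matrix n n ℂ} (hρ : ρ.PosSemidef) : (Φ ρ).PosSemidef := by
  set X : Matrix (Fin 1 × n) (Fin 1 × n) ℂ := Matrix.of fun p q => ρ p.2 q.2 with hX
  have hXpsd : X.PosSemidef := by
    rw [Matrix.posSemidef_iff_dotProduct_mulVec]
    constructor
    · ext p q
      have := congrFun (congrFun hρ.isHermitian.eq p.2) q.2
      simpa [hX, Matrix.conjTranspose_apply] using this
    · intro x
      have : dotProduct (star x) (X *ᵥ x)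
          = dotProduct (star (fun i => x (0, i))) (ρ *ᵥ (fun i => x (0, i))) := by
        simp only [dotProduct, Matrix.mulVec, hX, Matrix.of_apply, Pi.star_apply]
        rw [Fintype.sum_prod_type]
        simp only [Fin.sum_univ_one]
        congr 1; ext i; congr 1
        rw [Fintype.sum_prod_type]
        simp only [Fin.sum_univ_one]
      rw [this]
      exact hρ.dotProduct_mulVec_nonneg _
  have h1 := hΦ.1 1 X hXpsd
  have hinner : ∀ p q : Fin 1 × m,
      (Matrix.of fun i j => X (p.1, i) (q.1, j)) = ρ := by
    intro p q; rfl
  have hM : (Matrix.of fun p q : Fin 1 × m => Φ ρ p.2 q.2).PosSemidef := h1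
  rw [Matrix.posSemidef_iff_dotProduct_mulVec]
  constructor
  · ext i j
    have := congrFun (congrFun hM.isHermitian.eq ((0 : Fin 1), i)) ((0 : Fin 1), j)
    simpa [Matrix.conjTranspose_apply] using this
  · intro x
    have h2 := hM.dotProduct_mulVec_nonneg (fun p => x p.2)
    have : dotProduct (star (fun p : Fin 1 × m => x p.2))
        ((Matrix.of fun p q : Fin 1 × m => Φ ρ p.2 q.2) *ᵥ (fun p => x p.2))
        = dotProduct (star x) (Φ ρ *ᵥ x) := by
      simp only [dotProduct, Matrix.mulVec, Matrix.of_apply, Pi.star_apply]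
      rw [Fintype.sum_prod_type]
      simp only [Fin.sum_univ_one]
      congr 1; ext i; congr 1
      rw [Fintype.sum_prod_type]
      simp only [Fin.sum_univ_one]
    rwa [this] at h2

lemma trace_pureMat_unit {φ : n → ℂ} (hφ : ∑ i, ‖φ i‖ ^ 2 = 1) :
    (pureMat φ).trace = 1 := by
  rw [trace_pureMat]
  have : dotProduct (star φ) φ = ((∑ i, ‖φ i‖ ^ 2 : ℝ) : ℂ) := by
    rw [dotProduct]
    push_cast
    congr 1; ext i
    rw [Pi.star_apply, Complex.star_def, ← Complex.normSq_eq_conj_mul_self,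
      Complex.normSq_eq_norm_sq]
    norm_num
  rw [this, hφ]; norm_num

lemma one_sub_pureMat_posSemidef {φ : n → ℂ} (hφ : ∑ i, ‖φ i‖ ^ 2 = 1) :
    ((1 : Matrix n n ℂ) - pureMat φ).PosSemidef := by
  rw [Matrix.posSemidef_iff_dotProduct_mulVec]
  constructor
  · exact Matrix.isHermitian_one.sub (pureMat_posSemidef φ).isHermitian
  · intro x
    have hdot : dotProduct (star x) (((1 : Matrix n n ℂ) - pureMat φ) *ᵥ x)
        = dotProduct (star x) x
          - star (dotProduct (star φ) x) * (dotProduct (star φ) x) := by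
      rw [Matrix.sub_mulVec, dotProduct_sub, Matrix.one_mulVec, pureMat_mulVec]
      congr 1
      simp only [dotProduct_smul, smul_eq_mul]
      rw [dotProduct, dotProduct]
      simp only [star_sum, star_mul', Pi.star_apply, star_star]
      have : ∑ i, φ i * star (x i) = ∑ i, star (x i) * φ i := by
        congr 1; ext i; ring
      rw [this, mul_comm]
    rw [hdot]
    set c := dotProduct (star φ) x with hc
    have h1 : dotProduct (star x) x = ((∑ i, ‖x i‖ ^ 2 : ℝ) : ℂ) := by
      rw [dotProduct]; push_cast
      congr 1; ext i
      rw [Pi.star_apply, Complex.star_def, ← Complex.normSq_eq_conj_mul_self,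
        Complex.normSq_eq_norm_sq]
      norm_num
    have h2 : star c * c = ((Complex.normSq c : ℝ) : ℂ) := by
      rw [Complex.star_def, Complex.normSq_eq_conj_mul_self]
    rw [h1, h2, ← Complex.ofReal_sub, Complex.zero_le_real, sub_nonneg]
    -- Cauchy-Schwarz
    have hcs : ‖c‖ ≤ ∑ i, ‖φ i‖ * ‖x i‖ := by
      rw [hc, dotProduct]
      refine (norm_sum_le _ _).trans ?_
      apply Finset.sum_le_sum
      intro i _
      rw [norm_mul, Pi.star_apply, norm_star]
    have hcs2 : (∑ i, ‖φ i‖ * ‖x i‖) ^ 2 ≤ (∑ i, ‖φ i‖ ^ 2) * ∑ i, ‖x i‖ ^ 2 :=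
      Finset.sum_mul_sq_le_sq_mul_sq _ _ _
    have : Complex.normSq c = ‖c‖ ^ 2 := by
      rw [Complex.normSq_eq_norm_sq]
    rw [this]
    calc ‖c‖ ^ 2 ≤ (∑ i, ‖φ i‖ * ‖x i‖) ^ 2 := by
          apply pow_le_pow_left₀ (norm_nonneg _) hcs
      _ ≤ (∑ i, ‖φ i‖ ^ 2) * ∑ i, ‖x i‖ ^ 2 := hcs2
      _ = ∑ i, ‖x i‖ ^ 2 := by rw [hφ, one_mul]

lemma dot_star_self (v : n → ℂ) :
    dotProduct (star v) v = ((∑ i, ‖v i‖ ^ 2 : ℝ) : ℂ) := by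
  rw [dotProduct]; push_cast
  congr 1; ext i
  rw [Pi.star_apply, Complex.star_def, ← Complex.normSq_eq_conj_mul_self,
    Complex.normSq_eq_norm_sq]
  norm_num

lemma eigCol_unit {X : Matrix n n ℂ} (hX : X.IsHermitian) (k : n) :
    ∑ i, ‖eigCol hX k i‖ ^ 2 = 1 := by
  have h := eigCol_orth hX k k
  rw [if_pos rfl, dot_star_self] at h
  exact_mod_cast h

lemma posPartTrace_pure_sub_smul_pure {γ : ℝ} (hγ : 0 ≤ γ) {φ ψ : n → ℂ}
    (hφ : ∑ i, ‖φ i‖ ^ 2 = 1) (hψ : ∑ i, ‖ψ i‖ ^ 2 = 1)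
    (horth : ∑ i, star (φ i) * ψ i = 0) :
    posPartTrace (pureMat φ - (γ : ℂ) • pureMat ψ) = 1 := by
  have hφd : dotProduct (star φ) φ = 1 := by
    rw [dot_star_self, hφ]; norm_num
  have horth' : dotProduct (star φ) ψ = 0 := by
    rw [dotProduct]; simpa [Pi.star_apply] using horth
  have hXh : (pureMat φ - (γ : ℂ) • pureMat ψ).IsHermitian :=
    (pureMat_posSemidef φ).isHermitian.sub (smul_isHermitian (pureMat_posSemidef ψ).isHermitian)
  apply le_antisymm
  · have hmono := posPartTrace_mono hXh (pureMat_posSemidef φ).isHermitian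
      (by rw [sub_sub_cancel]; exact smul_posSemidef hγ (pureMat_posSemidef ψ))
    rw [posPartTrace_psd (pureMat_posSemidef φ), trace_pureMat_unit hφ] at hmono
    simpa using hmono
  · have hub := var_le (pureMat_posSemidef φ) (one_sub_pureMat_posSemidef hφ) hXh
    have : (pureMat φ * (pureMat φ - (γ : ℂ) • pureMat ψ)).trace = 1 := by
      rw [Matrix.mul_sub, Matrix.mul_smul, Matrix.trace_sub, Matrix.trace_smul,
        trace_pureMat_mul_pureMat, trace_pureMat_mul_pureMat, hφd, horth']
      simp
    rw [this] at hub
    simpa using hub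

lemma key_bound (Φ : Matrix n n ℂ →ₗ[ℂ] Matrix n n ℂ) (hΦ : IsCPTP Φ)
    {γ : ℝ} (hγ : 1 ≤ γ) {ρ σ : Matrix n n ℂ}
    (hρp : ρ.PosSemidef) (hρt : ρ.trace = 1) (hσp : σ.PosSemidef) (hσt : σ.trace = 1)
    (hpos : 0 < posPartTrace (ρ - (γ : ℂ) • σ)) (M : ℝ)
    (hM : ∀ φ ψ : n → ℂ, (∑ i, ‖φ i‖ ^ 2 = 1) → (∑ i, ‖ψ i‖ ^ 2 = 1) →
      (∑ i, star (φ i) * ψ i = 0) →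
      posPartTrace (Φ (pureMat φ) - (γ : ℂ) • Φ (pureMat ψ)) ≤ M) :
    posPartTrace (Φ ρ - (γ : ℂ) • Φ σ) ≤ posPartTrace (ρ - (γ : ℂ) • σ) * M := by
  classical
  set Δ : Matrix n n ℂ := ρ - (γ : ℂ) • σ with hΔdef
  have hΔ : Δ.IsHermitian := hρp.isHermitian.sub (smul_isHermitian hσp.isHermitian)
  set lam : n → ℝ := hΔ.eigenvalues with hlam
  set a : n → ℝ := fun k => max (lam k) 0 with ha
  set b : n → ℝ := fun k => a k - lam k with hb
  have hb0 : ∀ k, 0 ≤ b k := fun k => by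
    rw [hb]; dsimp only; rw [ha]; dsimp only
    rcases le_or_gt (lam k) 0 with h | h
    · rw [max_eq_right h]; linarith
    · rw [max_eq_left h.le]; linarith
  have ha0 : ∀ k, 0 ≤ a k := fun k => le_max_right _ _
  have hab : ∀ k, a k * b k = 0 := fun k => by
    rw [hb]; dsimp only; rw [ha]; dsimp only
    rcases le_or_gt (lam k) 0 with h | h
    · rw [max_eq_right h]; ring
    · rw [max_eq_left h.le]; ring
  set p : ℝ := ∑ k, a k with hp
  set q : ℝ := ∑ k, b k with hq
  have hppt : posPartTrace Δ = p := by
    rw [posPartTrace, dif_pos hΔ]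
  have hp0 : 0 < p := by rw [← hppt]; exact hpos
  -- trace of Δ is 1 - γ
  have hΔtr : Δ.trace = ((1 - γ : ℝ) : ℂ) := by
    rw [hΔdef, Matrix.trace_sub, Matrix.trace_smul, hρt, hσt, smul_eq_mul, mul_one]
    push_cast; ring
  have hsumlam : ∑ k, lam k = 1 - γ := by
    have h1 := trace_eq_sum_eigenvalues hΔ
    rw [hΔtr] at h1
    have : ((∑ k, lam k : ℝ) : ℂ) = ((1 - γ : ℝ) : ℂ) := by
      rw [h1]; push_cast; rfl
    exact_mod_cast this
  have hqp : q = p + γ - 1 := by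
    rw [hq, hp]
    have : ∑ k, b k = ∑ k, a k - ∑ k, lam k := by
      rw [← Finset.sum_sub_distrib]
    rw [this, hsumlam]; ring
  -- p ≤ 1
  have hp1 : p ≤ 1 := by
    obtain ⟨T, hT, hT1, hTΔ⟩ := exists_opt hΔ
    have hsplit : (T * Δ).trace = (T * ρ).trace - (γ : ℂ) * (T * σ).trace := by
      rw [hΔdef, Matrix.mul_sub, Matrix.mul_smul, Matrix.trace_sub, Matrix.trace_smul]
      rfl
    have h2 : ((T * Δ).trace).re = ((T * ρ).trace).re - γ * ((T * σ).trace).re := by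
      rw [hsplit, Complex.sub_re, Complex.re_ofReal_mul]
    have h3 : ((T * ρ).trace).re ≤ 1 := by
      have := var_le hT hT1 hρp.isHermitian
      rwa [posPartTrace_psd hρp, hρt, Complex.one_re] at this
    have h4 : 0 ≤ ((T * σ).trace).re := trace_mul_psd_re_nonneg hT hσp
    have h5 : ((T * Δ).trace).re = p := by rw [hTΔ, hppt]
    nlinarith
  have hγp : γ * p ≤ q := by
    rw [hqp]
    nlinarith [mul_nonneg (sub_nonneg.2 hp1) (sub_nonneg.2 hγ)]
  have hq0 : 0 < q := lt_of_lt_of_le (by positivity) hγp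
  -- the channel outputs
  set S : n → Matrix n n ℂ := fun k => Φ (pureMat (eigCol hΔ k)) with hS
  have hSpsd : ∀ k, (S k).PosSemidef := fun k =>
    cptp_posSemidef Φ hΦ (pureMat_posSemidef _)
  have hSH : ∀ k, (S k).IsHermitian := fun k => (hSpsd k).isHermitian
  -- Φ ρ - γ Φ σ = ∑ λ_k S_k
  have hstep : Φ ρ - (γ : ℂ) • Φ σ = ∑ k, ((lam k : ℝ) : ℂ) • S k := by
    have h1 : Φ ρ - (γ : ℂ) • Φ σ = Φ Δ := by
      rw [hΔdef, map_sub, _root_.map_smul]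
    rw [h1]
    have h2 : Φ Δ = Φ (∑ k, ((lam k : ℝ) : ℂ) • pureMat (eigCol hΔ k)) :=
      congrArg Φ (rankOne_decomposition hΔ)
    rw [h2, map_sum]
    simp only [_root_.map_smul, hS]
  -- the dominating matrix Y
  set Y : Matrix n n ℂ := ∑ k, ((a k - γ * p / q * b k : ℝ) : ℂ) • S k with hY
  have hXH : (∑ k, ((lam k : ℝ) : ℂ) • S k).IsHermitian :=
    sum_smul_isHermitian _ _ _ (fun k _ => hSH k)
  have hYH : Y.IsHermitian :=
    sum_smul_isHermitian _ _ _ (fun k _ => hSH k)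
  have hmono : posPartTrace (∑ k, ((lam k : ℝ) : ℂ) • S k) ≤ posPartTrace Y := by
    apply posPartTrace_mono hXH hYH
    have hdiff : Y - ∑ k, ((lam k : ℝ) : ℂ) • S k
        = ∑ k, (((1 - γ * p / q) * b k : ℝ) : ℂ) • S k := by
      rw [hY, ← Finset.sum_sub_distrib]
      congr 1; ext k
      rw [← sub_smul]
      congr 1
      push_cast
      rw [hb]; dsimp only; push_cast; ring
    rw [hdiff]
    apply sum_smul_posSemidef _ _ (fun k _ => ?_) _ (fun k _ => hSpsd k)
    have h1 : γ * p / q ≤ 1 := by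
      rw [div_le_one hq0]; exact hγp
    exact mul_nonneg (by linarith) (hb0 k)
  -- Y as a double sum
  have hYdouble : Y = ∑ kl : n × n, ((a kl.1 * b kl.2 / q : ℝ) : ℂ)
      • (S kl.1 - (γ : ℂ) • S kl.2) := by
    have hrow : ∀ k, ∑ l, ((a k * b l / q : ℝ) : ℂ) • (S k - (γ : ℂ) • S l)
        = ((a k : ℝ) : ℂ) • S k - ∑ l, ((γ * a k * b l / q : ℝ) : ℂ) • S l := by
      intro k
      have hsplit : ∀ l, ((a k * b l / q : ℝ) : ℂ) • (S k - (γ : ℂ) • S l)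
          = ((a k * b l / q : ℝ) : ℂ) • S k - ((γ * a k * b l / q : ℝ) : ℂ) • S l := by
        intro l
        rw [smul_sub]
        congr 1
        rw [smul_smul]
        congr 1
        push_cast; ring
      rw [Finset.sum_congr rfl (fun l _ => hsplit l), Finset.sum_sub_distrib]
      congr 1
      rw [← Finset.sum_smul]
      congr 1
      rw [← Complex.ofReal_sum]
      congr 1
      have e : ∀ l, a k * b l / q = b l * (a k / q) := fun l => by ring
      rw [Finset.sum_congr rfl (fun l _ => e l), ← Finset.sum_mul, ← hq]
      field_simp
    calc Y = ∑ k, (((a k : ℝ) : ℂ) • S k - ∑ l, ((γ * a k * b l / q : ℝ) : ℂ) • S l) := by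
          rw [hY, Finset.sum_sub_distrib]
          have h2 : ∑ k, ∑ l, ((γ * a k * b l / q : ℝ) : ℂ) • S l
              = ∑ k, ((γ * p / q * b k : ℝ) : ℂ) • S k := by
            rw [Finset.sum_comm]
            congr 1; ext l
            rw [← Finset.sum_smul]
            congr 1
            rw [← Complex.ofReal_sum]
            congr 1
            have e : ∀ k, γ * a k * b l / q = a k * (γ * b l / q) := fun k => by ring
            rw [Finset.sum_congr rfl (fun k _ => e k), ← Finset.sum_mul, ← hp]
            ring
          rw [h2, ← Finset.sum_sub_distrib]
          congr 1; ext k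
          rw [← sub_smul]
          congr 1
          push_cast; ring
      _ = ∑ kl : n × n, ((a kl.1 * b kl.2 / q : ℝ) : ℂ) • (S kl.1 - (γ : ℂ) • S kl.2) := by
          rw [Fintype.sum_prod_type]
          exact (Finset.sum_congr rfl (fun k _ => hrow k)).symm
  have hconv : posPartTrace Y ≤ ∑ kl : n × n,
      (a kl.1 * b kl.2 / q) * posPartTrace (S kl.1 - (γ : ℂ) • S kl.2) := by
    rw [hYdouble]
    exact posPartTrace_sum_le _ _
      (fun kl _ => div_nonneg (mul_nonneg (ha0 kl.1) (hb0 kl.2)) hq0.le) _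
      (fun kl _ => (hSH kl.1).sub (smul_isHermitian (hSH kl.2)))
  have hterm : ∀ kl : n × n, (a kl.1 * b kl.2 / q) * posPartTrace (S kl.1 - (γ : ℂ) • S kl.2)
      ≤ (a kl.1 * b kl.2 / q) * M := by
    rintro ⟨k, l⟩
    by_cases hkl : k = l
    · subst hkl
      simp only [hab k, zero_div, zero_mul, le_refl]
    · have horthkl : ∑ i, star (eigCol hΔ k i) * eigCol hΔ l i = 0 := by
        have h := eigCol_orth hΔ k l
        rw [if_neg hkl] at h
        simpa [dotProduct] using h
      exact mul_le_mul_of_nonneg_left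
        (hM (eigCol hΔ k) (eigCol hΔ l) (eigCol_unit hΔ k) (eigCol_unit hΔ l) horthkl)
        (div_nonneg (mul_nonneg (ha0 k) (hb0 l)) hq0.le)
  have hsumcoef : ∑ kl : n × n, (a kl.1 * b kl.2 / q) * M = p * M := by
    rw [Fintype.sum_prod_type]
    have e : ∀ k l, a k * b l / q * M = a k * (b l * (M / q)) := fun k l => by ring
    calc ∑ k, ∑ l, a k * b l / q * M = ∑ k, ∑ l, a k * (b l * (M / q)) :=
          Finset.sum_congr rfl (fun k _ => Finset.sum_congr rfl (fun l _ => e k l))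
      _ = ∑ k, a k * (q * (M / q)) := by
          congr 1; ext k
          rw [← Finset.mul_sum, ← Finset.sum_mul, ← hq]
      _ = p * M := by
          rw [← Finset.sum_mul, ← hp]
          field_simp
  calc posPartTrace (Φ ρ - (γ : ℂ) • Φ σ)
      = posPartTrace (∑ k, ((lam k : ℝ) : ℂ) • S k) := by rw [hstep]
    _ ≤ posPartTrace Y := hmono
    _ ≤ ∑ kl : n × n, (a kl.1 * b kl.2 / q) * posPartTrace (S kl.1 - (γ : ℂ) • S kl.2) := hconv
    _ ≤ ∑ kl : n × n, (a kl.1 * b kl.2 / q) * M := Finset.sum_le_sum (fun kl _ => hterm kl)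
    _ = p * M := hsumcoef
    _ = posPartTrace Δ * M := by rw [hppt]

end Aux

/-- The hockey-stick contraction coefficient is attained on orthogonal pure states. -/
theorem contractionCoeff_eq_sup_orthogonal_pure {d : ℕ} (hd : 2 ≤ d)
    (Φ : Matrix (Fin d) (Fin d) ℂ →ₗ[ℂ] Matrix (Fin d) (Fin d) ℂ) (hΦ : IsCPTP Φ)
    (γ : ℝ) (hγ : 1 ≤ γ) :
    contractionCoeff γ Φ =
      sSup {x : ℝ | ∃ φ ψ : Fin d → ℂ,
        (∑ i, ‖φ i‖ ^ 2 = 1) ∧ (∑ i, ‖ψ i‖ ^ 2 = 1) ∧ (∑ i, star (φ i) * ψ i = 0) ∧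
        x = hsDiv γ (Φ (Matrix.of fun i j => φ i * star (φ j)))
                  (Φ (Matrix.of fun i j => ψ i * star (ψ j)))} := by
  classical
  set R : Set ℝ := {x : ℝ | ∃ φ ψ : Fin d → ℂ,
        (∑ i, ‖φ i‖ ^ 2 = 1) ∧ (∑ i, ‖ψ i‖ ^ 2 = 1) ∧ (∑ i, star (φ i) * ψ i = 0) ∧
        x = hsDiv γ (Φ (Matrix.of fun i j => φ i * star (φ j)))
                  (Φ (Matrix.of fun i j => ψ i * star (ψ j)))} with hR
  have hpure : ∀ φ : Fin d → ℂ, (Matrix.of fun i j => φ i * star (φ j)) = pureMat φ :=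
    fun φ => rfl
  have hden : ∀ φ : Fin d → ℂ, (∑ i, ‖φ i‖ ^ 2 = 1) → IsDensity (pureMat φ) :=
    fun φ h => ⟨pureMat_posSemidef φ, trace_pureMat_unit h⟩
  have hγ0 : (0 : ℝ) ≤ γ := le_trans zero_le_one hγ
  have hsdiv_pure : ∀ φ ψ : Fin d → ℂ, (∑ i, ‖φ i‖ ^ 2 = 1) → (∑ i, ‖ψ i‖ ^ 2 = 1) →
      (∑ i, star (φ i) * ψ i = 0) → hsDiv γ (pureMat φ) (pureMat ψ) = 1 :=
    fun φ ψ h1 h2 h3 => posPartTrace_pure_sub_smul_pure hγ0 h1 h2 h3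
  -- R ⊆ L
  have hRL : R ⊆ {x : ℝ | ∃ ρ σ : Matrix (Fin d) (Fin d) ℂ, IsDensity ρ ∧ IsDensity σ ∧
      0 < hsDiv γ ρ σ ∧ x = hsDiv γ (Φ ρ) (Φ σ) / hsDiv γ ρ σ} := by
    rintro x ⟨φ, ψ, hφ, hψ, horth, rfl⟩
    refine ⟨pureMat φ, pureMat ψ, hden φ hφ, hden ψ hψ, ?_, ?_⟩
    · rw [hsdiv_pure φ ψ hφ hψ horth]; norm_num
    · rw [hsdiv_pure φ ψ hφ hψ horth, div_one, hpure, hpure]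
  -- R is nonempty
  have hR_ne : R.Nonempty := by
    set φ0 : Fin d → ℂ := fun i => if i = (⟨0, by omega⟩ : Fin d) then 1 else 0 with hφ0
    set ψ0 : Fin d → ℂ := fun i => if i = (⟨1, by omega⟩ : Fin d) then 1 else 0 with hψ0
    have hunit : ∀ (j : Fin d), ∑ i, ‖(if i = j then (1 : ℂ) else 0)‖ ^ 2 = 1 := by
      intro j
      rw [Finset.sum_eq_single j]
      · simp
      · intro b _ hb; simp [hb]
      · simp
    have horth : ∑ i, star (φ0 i) * ψ0 i = 0 := by
      apply Finset.sum_eq_zero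
      intro i _
      rw [hφ0, hψ0]
      dsimp only
      rcases eq_or_ne i (⟨0, by omega⟩ : Fin d) with h | h
      · have : i ≠ (⟨1, by omega⟩ : Fin d) := by
          rw [h]; intro hc; exact absurd (congrArg Fin.val hc) (by norm_num)
        simp [h, this]
      · simp [h]
    exact ⟨_, φ0, ψ0, hunit _, hunit _, horth, rfl⟩
  -- R is bounded above by 1
  have hR_bdd : ∀ x ∈ R, x ≤ 1 := by
    rintro x ⟨φ, ψ, hφ, hψ, horth, rfl⟩
    rw [hpure, hpure]
    have hΦφ : (Φ (pureMat φ)).PosSemidef := cptp_posSemidef Φ hΦ (pureMat_posSemidef φ)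
    have hΦψ : (Φ (pureMat ψ)).PosSemidef := cptp_posSemidef Φ hΦ (pureMat_posSemidef ψ)
    have hXh : (Φ (pureMat φ) - (γ : ℂ) • Φ (pureMat ψ)).IsHermitian :=
      hΦφ.isHermitian.sub (smul_isHermitian hΦψ.isHermitian)
    have hmono := posPartTrace_mono hXh hΦφ.isHermitian
      (by rw [sub_sub_cancel]; exact smul_posSemidef hγ0 hΦψ)
    rw [posPartTrace_psd hΦφ, hΦ.2 (pureMat φ), trace_pureMat_unit hφ] at hmono
    simpa [hsDiv] using hmono
  have hR_bddAbove : BddAbove R := ⟨1, fun x hx => hR_bdd x hx⟩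
  -- every ratio is at most sSup R
  have hL_bound : ∀ x ∈ {x : ℝ | ∃ ρ σ : Matrix (Fin d) (Fin d) ℂ, IsDensity ρ ∧ IsDensity σ ∧
      0 < hsDiv γ ρ σ ∧ x = hsDiv γ (Φ ρ) (Φ σ) / hsDiv γ ρ σ}, x ≤ sSup R := by
    rintro x ⟨ρ, σ, hρ, hσ, hpos, rfl⟩
    have hkey := key_bound Φ hΦ hγ hρ.1 hρ.2 hσ.1 hσ.2 hpos (sSup R)
      (fun φ ψ h1 h2 h3 => le_csSup hR_bddAbove ⟨φ, ψ, h1, h2, h3, rfl⟩)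
    rw [div_le_iff₀ hpos]
    calc hsDiv γ (Φ ρ) (Φ σ) = posPartTrace (Φ ρ - (γ : ℂ) • Φ σ) := rfl
      _ ≤ posPartTrace (ρ - (γ : ℂ) • σ) * sSup R := hkey
      _ = sSup R * hsDiv γ ρ σ := mul_comm _ _
  have hL_ne : {x : ℝ | ∃ ρ σ : Matrix (Fin d) (Fin d) ℂ, IsDensity ρ ∧ IsDensity σ ∧
      0 < hsDiv γ ρ σ ∧ x = hsDiv γ (Φ ρ) (Φ σ) / hsDiv γ ρ σ}.Nonempty :=
    hR_ne.mono hRL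
  apply le_antisymm
  · exact csSup_le hL_ne hL_bound
  · exact csSup_le_csSup ⟨sSup R, fun x hx => hL_bound x hx⟩ hR_ne hRL
end

section
/- Triangle-type inequality for the hockey-stick divergence: for any density operators ρ, σ, τ on a finite-dimensional complex Hilbert space and any γ₁, γ₂ ≥ 1, E_{γ₁γ₂}(ρ‖σ) ≤ E_{γ₁}(ρ‖τ) + γ₁·E_{γ₂}(τ‖σ). -/
open scoped BigOperators ComplexOrder

open Matrix

section Aux

variable {n : Type*} [Fintype n] [DecidableEq n]

lemma isHermitian_real_smul {A : Matrix n n ℂ} (hA : A.IsHermitian) (c : ℝ) :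
    ((c : ℂ) • A).IsHermitian := by
  rw [Matrix.IsHermitian, Matrix.conjTranspose_smul, hA.eq, Complex.star_def,
    Complex.conj_ofReal]

lemma trace_nonneg_of_psd {A : Matrix n n ℂ} (hA : A.PosSemidef) : 0 ≤ A.trace := by
  rw [Matrix.trace]
  apply Finset.sum_nonneg
  intro i _
  have h := hA.diag_nonneg (i := i)
  exact h

open scoped MatrixOrder in
lemma trace_mul_nonneg_of_psd {A B : Matrix n n ℂ} (hA : A.PosSemidef) (hB : B.PosSemidef) :
    0 ≤ (A * B).trace := by
  have h1 : A = CFC.sqrt A * CFC.sqrt A := (CFC.sqrt_mul_sqrt_self A hA.nonneg).symm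
  have h2 : (A * B).trace = (CFC.sqrt A * B * CFC.sqrt A).trace := by
    conv_lhs => rw [h1]
    rw [mul_assoc, Matrix.trace_mul_comm]
  rw [h2]
  have hherm : (CFC.sqrt A).IsHermitian := (CFC.sqrt_nonneg A).posSemidef.isHermitian
  have h3 : (CFC.sqrt A * B * (CFC.sqrt A)ᴴ).PosSemidef := hB.mul_mul_conjTranspose_same (CFC.sqrt A)
  rw [hherm.eq] at h3
  exact trace_nonneg_of_psd h3

lemma conj_trace {U : Matrix n n ℂ} (hU : U ∈ Matrix.unitaryGroup n ℂ) (D : Matrix n n ℂ) :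
    (U * D * Uᴴ).trace = D.trace := by
  rw [Matrix.trace_mul_comm, ← mul_assoc, ← Matrix.star_eq_conjTranspose,
    (Matrix.mem_unitaryGroup_iff'.mp hU), one_mul]

lemma spectral' {X : Matrix n n ℂ} (hX : X.IsHermitian) :
    X = (hX.eigenvectorUnitary : Matrix n n ℂ) *
      Matrix.diagonal (fun i => (hX.eigenvalues i : ℂ)) *
      (hX.eigenvectorUnitary : Matrix n n ℂ)ᴴ := by
  conv_lhs => rw [hX.spectral_theorem]
  rfl

lemma conj_diag_psd {U : Matrix n n ℂ} (f : n → ℝ) (hf : ∀ i, 0 ≤ f i) :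
    (U * Matrix.diagonal (fun i => (f i : ℂ)) * Uᴴ).PosSemidef := by
  refine Matrix.PosSemidef.mul_mul_conjTranspose_same ?_ U
  exact Matrix.PosSemidef.diagonal fun i => by
    simpa using Complex.zero_le_real.mpr (hf i)

lemma posPartTrace_bound {X M : Matrix n n ℂ} (hX : X.IsHermitian)
    (hM : M.PosSemidef) (hM' : (1 - M).PosSemidef) :
    (M * X).trace ≤ (posPartTrace X : ℂ) := by
  set U : Matrix n n ℂ := (hX.eigenvectorUnitary : Matrix n n ℂ) with hUdef
  have hU : U ∈ Matrix.unitaryGroup n ℂ := hX.eigenvectorUnitary.2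
  set lam := hX.eigenvalues with hlam
  set Xp : Matrix n n ℂ := U * Matrix.diagonal (fun i => ((max (lam i) 0 : ℝ) : ℂ)) * Uᴴ
    with hXpdef
  set Xm : Matrix n n ℂ := U * Matrix.diagonal (fun i => ((max (-lam i) 0 : ℝ) : ℂ)) * Uᴴ
    with hXmdef
  have hXp : Xp.PosSemidef := conj_diag_psd _ fun i => le_max_right _ _
  have hXm : Xm.PosSemidef := conj_diag_psd _ fun i => le_max_right _ _
  have hdecomp : X = Xp - Xm := by
    have h0 : (fun i => ((max (lam i) 0 : ℝ) : ℂ) - ((max (-lam i) 0 : ℝ) : ℂ))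
        = fun i => (lam i : ℂ) := by
      funext i
      rw [← Complex.ofReal_sub, max_zero_sub_max_neg_zero_eq_self]
    have h1 : Xp - Xm = U * Matrix.diagonal (fun i => (lam i : ℂ)) * Uᴴ := by
      rw [hXpdef, hXmdef, ← sub_mul, ← mul_sub, Matrix.diagonal_sub, h0]
    rw [h1]
    exact spectral' hX
  have hTrXp : Xp.trace = (posPartTrace X : ℂ) := by
    rw [hXpdef, conj_trace hU, Matrix.trace_diagonal, posPartTrace, dif_pos hX]
    push_cast
    rfl
  have e1 : (M * X).trace = (M * Xp).trace - (M * Xm).trace := by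
    rw [hdecomp, mul_sub, Matrix.trace_sub]
  have h2 : 0 ≤ (M * Xm).trace := trace_mul_nonneg_of_psd hM hXm
  have h3 : (M * Xp).trace ≤ Xp.trace := by
    have h4 := trace_mul_nonneg_of_psd hM' hXp
    rw [sub_mul, one_mul, Matrix.trace_sub] at h4
    exact sub_nonneg.mp h4
  calc (M * X).trace = (M * Xp).trace - (M * Xm).trace := e1
    _ ≤ (M * Xp).trace := sub_le_self _ h2
    _ ≤ Xp.trace := h3
    _ = (posPartTrace X : ℂ) := hTrXp

lemma posPartTrace_attain {X : Matrix n n ℂ} (hX : X.IsHermitian) :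
    ∃ P : Matrix n n ℂ, P.PosSemidef ∧ (1 - P).PosSemidef ∧
      (P * X).trace = (posPartTrace X : ℂ) := by
  set U : Matrix n n ℂ := (hX.eigenvectorUnitary : Matrix n n ℂ) with hUdef
  have hU : U ∈ Matrix.unitaryGroup n ℂ := hX.eigenvectorUnitary.2
  have hUU : Uᴴ * U = 1 := by
    rw [← Matrix.star_eq_conjTranspose]; exact Matrix.mem_unitaryGroup_iff'.mp hU
  have hUU' : U * Uᴴ = 1 := by
    rw [← Matrix.star_eq_conjTranspose]; exact Matrix.mem_unitaryGroup_iff.mp hU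
  set lam := hX.eigenvalues with hlam
  set ind : n → ℝ := fun i => if 0 ≤ lam i then 1 else 0 with hind
  refine ⟨U * Matrix.diagonal (fun i => ((ind i : ℝ) : ℂ)) * Uᴴ, ?_, ?_, ?_⟩
  · exact conj_diag_psd _ fun i => by by_cases h : 0 ≤ lam i <;> simp [hind, h]
  · have hd : Matrix.diagonal (fun i => ((1 - ind i : ℝ) : ℂ))
        = 1 - Matrix.diagonal (fun i => ((ind i : ℝ) : ℂ)) := by
      ext i j
      rcases eq_or_ne i j with rfl | h
      · push_cast [Matrix.diagonal_apply_eq, Matrix.sub_apply, Matrix.one_apply_eq]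
        ring
      · simp [Matrix.diagonal_apply_ne _ h, Matrix.sub_apply, Matrix.one_apply_ne h]
    have h1 : (1 : Matrix n n ℂ) - U * Matrix.diagonal (fun i => ((ind i : ℝ) : ℂ)) * Uᴴ
        = U * Matrix.diagonal (fun i => ((1 - ind i : ℝ) : ℂ)) * Uᴴ := by
      rw [hd, mul_sub, mul_one, sub_mul, hUU']
    rw [h1]
    exact conj_diag_psd _ fun i => by by_cases h : 0 ≤ lam i <;> simp [hind, h]
  · have hprod : (U * Matrix.diagonal (fun i => ((ind i : ℝ) : ℂ)) * Uᴴ) * X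
        = U * (Matrix.diagonal (fun i => ((ind i : ℝ) : ℂ)) *
            Matrix.diagonal (fun i => (lam i : ℂ))) * Uᴴ := by
      conv_lhs => rw [spectral' hX]
      rw [← hUdef, ← hlam]
      rw [show (U * Matrix.diagonal (fun i => ((ind i : ℝ) : ℂ)) * Uᴴ) *
          (U * Matrix.diagonal (fun i => (lam i : ℂ)) * Uᴴ)
        = U * Matrix.diagonal (fun i => ((ind i : ℝ) : ℂ)) * (Uᴴ * U) *
            (Matrix.diagonal (fun i => (lam i : ℂ)) * Uᴴ) by simp only [mul_assoc]]
      rw [hUU, mul_one, mul_assoc, mul_assoc, ← mul_assoc (Matrix.diagonal _)]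
    rw [hprod, conj_trace hU, Matrix.diagonal_mul_diagonal, Matrix.trace_diagonal,
      posPartTrace, dif_pos hX]
    push_cast
    congr 1
    funext i
    by_cases h : 0 ≤ lam i
    · simp [hind, h, ← hlam, max_eq_left h]
    · simp [hind, h, ← hlam, max_eq_right (le_of_not_ge h)]

lemma posPartTrace_add_le {A B : Matrix n n ℂ} (hA : A.IsHermitian) (hB : B.IsHermitian) :
    posPartTrace (A + B) ≤ posPartTrace A + posPartTrace B := by
  obtain ⟨P, hP, hP', hPeq⟩ := posPartTrace_attain (hA.add hB)
  have h1 : (P * (A + B)).trace = (P * A).trace + (P * B).trace := by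
    rw [mul_add, Matrix.trace_add]
  have h2 := posPartTrace_bound hA hP hP'
  have h3 := posPartTrace_bound hB hP hP'
  have h4 : (posPartTrace (A + B) : ℂ) ≤ ((posPartTrace A + posPartTrace B : ℝ) : ℂ) := by
    rw [← hPeq, h1]
    push_cast
    exact add_le_add h2 h3
  exact_mod_cast h4

lemma posPartTrace_smul_le {B : Matrix n n ℂ} (hB : B.IsHermitian) {c : ℝ} (hc : 0 ≤ c) :
    posPartTrace ((c : ℂ) • B) ≤ c * posPartTrace B := by
  have hcB : ((c : ℂ) • B).IsHermitian := isHermitian_real_smul hB c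
  obtain ⟨P, hP, hP', hPeq⟩ := posPartTrace_attain hcB
  have h1 : (P * ((c : ℂ) • B)).trace = (c : ℂ) * (P * B).trace := by
    rw [Matrix.mul_smul, Matrix.trace_smul, smul_eq_mul]
  have h2 := posPartTrace_bound hB hP hP'
  have h3 : (posPartTrace ((c : ℂ) • B) : ℂ) ≤ ((c * posPartTrace B : ℝ) : ℂ) := by
    rw [← hPeq, h1]
    push_cast
    exact mul_le_mul_of_nonneg_left h2 (Complex.zero_le_real.mpr hc)
  exact_mod_cast h3

end Aux

/-- Triangle-type inequality for the hockey-stick divergence. -/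
theorem hsDiv_triangle {d : ℕ} (ρ σ τ : Matrix (Fin d) (Fin d) ℂ)
    (hρ : IsDensity ρ) (hσ : IsDensity σ) (hτ : IsDensity τ)
    (γ₁ γ₂ : ℝ) (hγ₁ : 1 ≤ γ₁) (hγ₂ : 1 ≤ γ₂) :
    hsDiv (γ₁ * γ₂) ρ σ ≤ hsDiv γ₁ ρ τ + γ₁ * hsDiv γ₂ τ σ := by
  have hρh := hρ.1.1
  have hσh := hσ.1.1
  have hτh := hτ.1.1
  have hA : (ρ - (γ₁ : ℂ) • τ).IsHermitian := hρh.sub (isHermitian_real_smul hτh γ₁)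
  have hB : (τ - (γ₂ : ℂ) • σ).IsHermitian := hτh.sub (isHermitian_real_smul hσh γ₂)
  have hdec : ρ - ((γ₁ * γ₂ : ℝ) : ℂ) • σ
      = (ρ - (γ₁ : ℂ) • τ) + (γ₁ : ℂ) • (τ - (γ₂ : ℂ) • σ) := by
    push_cast
    rw [smul_sub, smul_smul]
    abel
  unfold hsDiv
  rw [hdec]
  calc posPartTrace ((ρ - (γ₁ : ℂ) • τ) + (γ₁ : ℂ) • (τ - (γ₂ : ℂ) • σ))
      ≤ posPartTrace (ρ - (γ₁ : ℂ) • τ) + posPartTrace ((γ₁ : ℂ) • (τ - (γ₂ : ℂ) • σ)) :=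
        posPartTrace_add_le hA (isHermitian_real_smul hB γ₁)
    _ ≤ posPartTrace (ρ - (γ₁ : ℂ) • τ) + γ₁ * posPartTrace (τ - (γ₂ : ℂ) • σ) := by
        have := posPartTrace_smul_le hB (le_trans zero_le_one hγ₁)
        linarith
end

section
/- Strong convexity of the hockey-stick divergence: let γ₁, γ₂ ≥ 1, let x range over a finite index set, let p and q be probability distributions on this set, and let ρ_x, σ_x be density operators on a fixed finite-dimensional complex Hilbert space. Setting ρ = Σ_x p(x)·ρ_x and σ = Σ_x q(x)·σ_x, one has E_{γ₁γ₂}(ρ‖σ) ≤ Σ_x p(x)·E_{γ₁}(ρ_x‖σ_x) + γ₁·E_{γ₂}(p‖q), where E_γ(p‖q) := Σ_x max(p(x) − γ·q(x), 0) is the classical hockey-stick divergence. -/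
open scoped BigOperators ComplexOrder

namespace HSAux
open Matrix

variable {n : Type*} [Fintype n] [DecidableEq n]

lemma trace_mul_formula {A : Matrix n n ℂ} (hA : A.IsHermitian) (P : Matrix n n ℂ) :
    (P * A).trace = ∑ i, (hA.eigenvalues i : ℂ) *
      ((star (hA.eigenvectorUnitary : Matrix n n ℂ)) * P * (hA.eigenvectorUnitary : Matrix n n ℂ)) i i := by
  conv_lhs => rw [hA.spectral_theorem, Unitary.conjStarAlgAut_apply]
  set U : Matrix n n ℂ := (hA.eigenvectorUnitary : Matrix n n ℂ)
  have h1 : P * (U * diagonal (RCLike.ofReal ∘ hA.eigenvalues) * star U)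
      = (P * U) * diagonal (RCLike.ofReal ∘ hA.eigenvalues) * star U := by
    simp only [mul_assoc]
  rw [h1, Matrix.trace_mul_cycle, Matrix.trace]
  apply Finset.sum_congr rfl
  intro i _
  simp [Matrix.diag, Matrix.mul_diagonal, Matrix.mul_assoc, mul_comm]

lemma diag_nonneg {M : Matrix n n ℂ} (hM : M.PosSemidef) (i : n) :
    0 ≤ (M i i).re ∧ (M i i).im = 0 := by
  have := hM.diag_nonneg (i := i)
  rw [Complex.le_def] at this
  exact ⟨this.1, this.2.symm⟩

lemma diag_coeff {P : Matrix n n ℂ} (hP : P.PosSemidef) (hP1 : (1 - P).PosSemidef)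
    (U : Matrix.unitaryGroup n ℂ) (i : n) :
    0 ≤ (((star (U : Matrix n n ℂ)) * P * U) i i).re ∧
      (((star (U : Matrix n n ℂ)) * P * U) i i).re ≤ 1 ∧
      (((star (U : Matrix n n ℂ)) * P * U) i i).im = 0 := by
  set V : Matrix n n ℂ := (U : Matrix n n ℂ) with hV
  have h1 : ((star V) * P * V).PosSemidef := by
    have := hP.conjTranspose_mul_mul_same V
    simpa [Matrix.star_eq_conjTranspose] using this
  have h2 : ((star V) * (1 - P) * V).PosSemidef := by
    have := hP1.conjTranspose_mul_mul_same V
    simpa [Matrix.star_eq_conjTranspose] using this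
  have hVV : (star V) * V = 1 := Matrix.UnitaryGroup.star_mul_self U
  have heq : (star V) * (1 - P) * V = 1 - (star V) * P * V := by
    rw [Matrix.mul_sub, Matrix.sub_mul, mul_one, hVV]
  rw [heq] at h2
  obtain ⟨ha, hb⟩ := diag_nonneg h1 i
  obtain ⟨hc, _⟩ := diag_nonneg h2 i
  refine ⟨ha, ?_, hb⟩
  have h3 : ((1 : Matrix n n ℂ) - (star V) * P * V) i i = 1 - ((star V) * P * V) i i := by
    simp [Matrix.sub_apply, Matrix.one_apply]
  rw [h3] at hc
  simp at hc
  linarith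

lemma posPartTrace_of_hermitian {A : Matrix n n ℂ} (hA : A.IsHermitian) :
    posPartTrace A = ∑ i, max (hA.eigenvalues i) 0 := by
  simp [posPartTrace, hA]

lemma posPartTrace_nonneg (A : Matrix n n ℂ) : 0 ≤ posPartTrace A := by
  unfold posPartTrace
  split
  · exact Finset.sum_nonneg fun i _ => le_max_right _ _
  · exact le_refl 0

lemma trace_test_le {A : Matrix n n ℂ} (hA : A.IsHermitian)
    {P : Matrix n n ℂ} (hP : P.PosSemidef) (hP1 : (1 - P).PosSemidef) :
    ((P * A).trace).re ≤ posPartTrace A := by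
  rw [trace_mul_formula hA P, posPartTrace_of_hermitian hA]
  rw [Complex.re_sum]
  apply Finset.sum_le_sum
  intro i _
  obtain ⟨h0, h1, him⟩ := diag_coeff hP hP1 hA.eigenvectorUnitary i
  set c := (((star (hA.eigenvectorUnitary : Matrix n n ℂ)) * P *
      (hA.eigenvectorUnitary : Matrix n n ℂ)) i i)
  have hre : ((hA.eigenvalues i : ℂ) * c).re = hA.eigenvalues i * c.re := by
    simp [Complex.mul_re, him]
  rw [hre]
  rcases le_or_gt 0 (hA.eigenvalues i) with h | h
  · calc hA.eigenvalues i * c.re ≤ hA.eigenvalues i * 1 :=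
          mul_le_mul_of_nonneg_left h1 h
      _ = hA.eigenvalues i := by ring
      _ ≤ max (hA.eigenvalues i) 0 := le_max_left _ _
  · exact (mul_nonpos_of_nonpos_of_nonneg h.le h0).trans (le_max_right _ _)

lemma exists_test {A : Matrix n n ℂ} (hA : A.IsHermitian) :
    ∃ Q : Matrix n n ℂ, Q.PosSemidef ∧ (1 - Q).PosSemidef ∧
      (Q * A).trace = (posPartTrace A : ℂ) := by
  set U : Matrix n n ℂ := (hA.eigenvectorUnitary : Matrix n n ℂ) with hU
  have hVV : (star U) * U = 1 := Matrix.UnitaryGroup.star_mul_self hA.eigenvectorUnitary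
  have hVV' : U * (star U) = 1 := Matrix.mem_unitaryGroup_iff.mp hA.eigenvectorUnitary.2
  set d : n → ℂ := fun i => if 0 < hA.eigenvalues i then 1 else 0 with hd
  have hdpsd : (Matrix.diagonal d).PosSemidef := by
    rw [Matrix.posSemidef_diagonal_iff]
    intro i
    by_cases h : 0 < hA.eigenvalues i <;> simp [hd, h]
  have hdpsd1 : (Matrix.diagonal (fun i => 1 - d i)).PosSemidef := by
    rw [Matrix.posSemidef_diagonal_iff]
    intro i
    by_cases h : 0 < hA.eigenvalues i <;> simp [hd, h]
  refine ⟨U * Matrix.diagonal d * star U, ?_, ?_, ?_⟩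
  · have := hdpsd.mul_mul_conjTranspose_same U
    simpa [Matrix.star_eq_conjTranspose] using this
  · have heq : (1 : Matrix n n ℂ) - U * Matrix.diagonal d * star U
        = U * Matrix.diagonal (fun i => 1 - d i) * star U := by
      have : Matrix.diagonal (fun i => 1 - d i) = 1 - Matrix.diagonal d := by
        rw [← Matrix.diagonal_one, Matrix.diagonal_sub]
      rw [this, Matrix.mul_sub, Matrix.sub_mul, mul_one, hVV']
    rw [heq]
    have := hdpsd1.mul_mul_conjTranspose_same U
    simpa [Matrix.star_eq_conjTranspose] using this
  · rw [trace_mul_formula hA, posPartTrace_of_hermitian hA]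
    have hkey : ∀ i, ((star U) * (U * Matrix.diagonal d * star U) * U) i i = d i := by
      intro i
      have : (star U) * (U * Matrix.diagonal d * star U) * U = Matrix.diagonal d := by
        rw [show (star U) * (U * Matrix.diagonal d * star U) * U
            = ((star U) * U) * Matrix.diagonal d * ((star U) * U) by simp only [mul_assoc],
          hVV, one_mul, mul_one]
      rw [this, Matrix.diagonal_apply_eq]
    push_cast
    rw [Finset.sum_congr rfl (fun i _ => by rw [hkey i])]
    apply Finset.sum_congr rfl
    intro i _
    by_cases h : 0 < hA.eigenvalues i
    · simp [hd, h, max_eq_left h.le]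
    · have hm : max (hA.eigenvalues i) 0 = 0 := max_eq_right (not_lt.mp h)
      simp [hd, h, hm]

lemma smul_hermitian {A : Matrix n n ℂ} (hA : A.IsHermitian) (c : ℝ) :
    ((c : ℂ) • A).IsHermitian := by
  unfold Matrix.IsHermitian
  rw [Matrix.conjTranspose_smul, hA.eq, Complex.star_def, Complex.conj_ofReal]

lemma trace_mul_nonneg {P A : Matrix n n ℂ} (hP : P.PosSemidef) (hA : A.PosSemidef) :
    0 ≤ ((P * A).trace).re := by
  rw [trace_mul_formula hA.1 P, Complex.re_sum]
  apply Finset.sum_nonneg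
  intro i _
  have hpsd : ((star ((hA.1.eigenvectorUnitary : Matrix n n ℂ))) * P *
      (hA.1.eigenvectorUnitary : Matrix n n ℂ)).PosSemidef := by
    have := hP.conjTranspose_mul_mul_same (hA.1.eigenvectorUnitary : Matrix n n ℂ)
    simpa [Matrix.star_eq_conjTranspose] using this
  obtain ⟨h0, him⟩ := diag_nonneg hpsd i
  simp only [Complex.mul_re, Complex.ofReal_re, Complex.ofReal_im, him, zero_mul, mul_zero,
    sub_zero]
  exact mul_nonneg (hA.eigenvalues_nonneg i) h0

lemma posPartTrace_add_le {A B : Matrix n n ℂ} (hA : A.IsHermitian) (hB : B.IsHermitian) :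
    posPartTrace (A + B) ≤ posPartTrace A + posPartTrace B := by
  obtain ⟨Q, hQ, hQ1, hQt⟩ := exists_test (hA.add hB)
  have : posPartTrace (A + B) = ((Q * (A + B)).trace).re := by
    rw [hQt]; simp
  rw [this, Matrix.mul_add, Matrix.trace_add, Complex.add_re]
  exact add_le_add (trace_test_le hA hQ hQ1) (trace_test_le hB hQ hQ1)

lemma posPartTrace_zero : posPartTrace (0 : Matrix n n ℂ) = 0 := by
  obtain ⟨Q, _, _, hQt⟩ := exists_test (Matrix.isHermitian_zero (α := ℂ) (n := n))
  rw [mul_zero, Matrix.trace_zero] at hQt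
  exact_mod_cast hQt.symm

lemma posPartTrace_sum_le {ι : Type*} (s : Finset ι) (f : ι → Matrix n n ℂ)
    (hf : ∀ i ∈ s, (f i).IsHermitian) :
    posPartTrace (∑ i ∈ s, f i) ≤ ∑ i ∈ s, posPartTrace (f i) := by
  induction s using Finset.cons_induction with
  | empty => simp [posPartTrace_zero]
  | cons a s ha ih =>
    rw [Finset.sum_cons, Finset.sum_cons]
    have hs : (∑ i ∈ s, f i).IsHermitian := by
      rw [Matrix.IsHermitian, Matrix.conjTranspose_sum]
      exact Finset.sum_congr rfl fun i hi => (hf i (Finset.mem_cons_of_mem hi)).eq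
    calc posPartTrace (f a + ∑ i ∈ s, f i)
        ≤ posPartTrace (f a) + posPartTrace (∑ i ∈ s, f i) :=
          posPartTrace_add_le (hf a (Finset.mem_cons_self a s)) hs
      _ ≤ posPartTrace (f a) + ∑ i ∈ s, posPartTrace (f i) := by
          exact add_le_add_right (ih fun i hi => hf i (Finset.mem_cons_of_mem hi)) _

lemma posPartTrace_smul {A : Matrix n n ℂ} (hA : A.IsHermitian) {c : ℝ} (hc : 0 ≤ c) :
    posPartTrace ((c : ℂ) • A) = c * posPartTrace A := by
  have hcA : ((c : ℂ) • A).IsHermitian := smul_hermitian hA c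
  apply le_antisymm
  · obtain ⟨Q, hQ, hQ1, hQt⟩ := exists_test hcA
    have h1 : posPartTrace ((c : ℂ) • A) = ((Q * ((c : ℂ) • A)).trace).re := by
      rw [hQt]; simp
    rw [h1, Matrix.mul_smul, Matrix.trace_smul]
    have : (((c : ℂ) • (Q * A).trace)).re = c * ((Q * A).trace).re := by
      simp [Complex.smul_re]
    rw [this]
    exact mul_le_mul_of_nonneg_left (trace_test_le hA hQ hQ1) hc
  · obtain ⟨Q, hQ, hQ1, hQt⟩ := exists_test hA
    have h1 : c * posPartTrace A = ((Q * ((c : ℂ) • A)).trace).re := by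
      rw [Matrix.mul_smul, Matrix.trace_smul, hQt]
      simp
    rw [h1]
    exact trace_test_le hcA hQ hQ1

lemma posPartTrace_psd {A : Matrix n n ℂ} (hA : A.PosSemidef) :
    posPartTrace A = (A.trace).re := by
  rw [posPartTrace_of_hermitian hA.1]
  have h1 : A.trace = (1 * A).trace := by rw [one_mul]
  rw [h1, trace_mul_formula hA.1 1, Complex.re_sum]
  apply Finset.sum_congr rfl
  intro i _
  have hVV : (star ((hA.1.eigenvectorUnitary : Matrix n n ℂ))) * 1 *
      (hA.1.eigenvectorUnitary : Matrix n n ℂ) = 1 := by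
    rw [mul_one]
    exact Matrix.UnitaryGroup.star_mul_self hA.1.eigenvectorUnitary
  rw [hVV]
  simp [max_eq_left (hA.eigenvalues_nonneg i)]

lemma posPartTrace_smul_psd {A : Matrix n n ℂ} (hA : A.PosSemidef) (htr : A.trace = 1)
    (c : ℝ) : posPartTrace ((c : ℂ) • A) = max c 0 := by
  rcases le_or_gt 0 c with hc | hc
  · rw [posPartTrace_smul hA.1 hc, posPartTrace_psd hA, htr]
    simp [max_eq_left hc]
  · rw [max_eq_right hc.le]
    apply le_antisymm _ (posPartTrace_nonneg _)
    obtain ⟨Q, hQ, hQ1, hQt⟩ := exists_test (smul_hermitian hA.1 c)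
    have h1 : posPartTrace ((c : ℂ) • A) = ((Q * ((c : ℂ) • A)).trace).re := by
      rw [hQt]; simp
    rw [h1, Matrix.mul_smul, Matrix.trace_smul]
    have h2 : (((c : ℂ) • (Q * A).trace)).re = c * ((Q * A).trace).re := by
      simp [Complex.smul_re]
    rw [h2]
    exact mul_nonpos_of_nonpos_of_nonneg hc.le (trace_mul_nonneg hQ hA)

end HSAux

/-- Strong convexity of the hockey-stick divergence, with the classical
hockey-stick divergence `E_γ(p‖q) = Σ_x max (p x - γ q x) 0` of the mixing
distributions appearing on the right-hand side. -/
theorem hsDiv_strong_convexity {d m : ℕ}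
    (γ₁ γ₂ : ℝ) (hγ₁ : 1 ≤ γ₁) (hγ₂ : 1 ≤ γ₂)
    (p q : Fin m → ℝ) (hp0 : ∀ x, 0 ≤ p x) (hp1 : ∑ x, p x = 1)
    (hq0 : ∀ x, 0 ≤ q x) (hq1 : ∑ x, q x = 1)
    (ρ σ : Fin m → Matrix (Fin d) (Fin d) ℂ)
    (hρ : ∀ x, IsDensity (ρ x)) (hσ : ∀ x, IsDensity (σ x)) :
    hsDiv (γ₁ * γ₂) (∑ x, (p x : ℂ) • ρ x) (∑ x, (q x : ℂ) • σ x) ≤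
      ∑ x, p x * hsDiv γ₁ (ρ x) (σ x) + γ₁ * ∑ x, max (p x - γ₂ * q x) 0 := by
  have hγ₁0 : (0:ℝ) ≤ γ₁ := le_trans zero_le_one hγ₁
  set A : Fin m → Matrix (Fin d) (Fin d) ℂ :=
    fun x => ((p x : ℝ) : ℂ) • (ρ x - (γ₁ : ℂ) • σ x) with hAdef
  set B : Fin m → Matrix (Fin d) (Fin d) ℂ :=
    fun x => ((γ₁ * (p x - γ₂ * q x) : ℝ) : ℂ) • σ x with hBdef
  have hAherm : ∀ x, (A x).IsHermitian := fun x =>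
    HSAux.smul_hermitian ((hρ x).1.1.sub (HSAux.smul_hermitian (hσ x).1.1 γ₁)) _
  have hBherm : ∀ x, (B x).IsHermitian := fun x =>
    HSAux.smul_hermitian (hσ x).1.1 _
  have hdecomp : (∑ x, (p x : ℂ) • ρ x) - ((γ₁ * γ₂ : ℝ) : ℂ) • (∑ x, (q x : ℂ) • σ x)
      = ∑ x, (A x + B x) := by
    rw [Finset.smul_sum, ← Finset.sum_sub_distrib]
    apply Finset.sum_congr rfl
    intro x _
    rw [hAdef, hBdef]
    push_cast
    match_scalars <;> ring
  have step1 : hsDiv (γ₁ * γ₂) (∑ x, (p x : ℂ) • ρ x) (∑ x, (q x : ℂ) • σ x)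
      ≤ ∑ x, (posPartTrace (A x) + posPartTrace (B x)) := by
    rw [hsDiv, hdecomp]
    calc posPartTrace (∑ x, (A x + B x)) ≤ ∑ x, posPartTrace (A x + B x) :=
          HSAux.posPartTrace_sum_le _ _ fun x _ => (hAherm x).add (hBherm x)
      _ ≤ ∑ x, (posPartTrace (A x) + posPartTrace (B x)) :=
          Finset.sum_le_sum fun x _ => HSAux.posPartTrace_add_le (hAherm x) (hBherm x)
  have hA_eq : ∀ x, posPartTrace (A x) = p x * hsDiv γ₁ (ρ x) (σ x) := by
    intro x
    rw [hAdef]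
    exact HSAux.posPartTrace_smul ((hρ x).1.1.sub (HSAux.smul_hermitian (hσ x).1.1 γ₁)) (hp0 x)
  have hB_eq : ∀ x, posPartTrace (B x) = γ₁ * max (p x - γ₂ * q x) 0 := by
    intro x
    rw [hBdef, HSAux.posPartTrace_smul_psd (hσ x).1 (hσ x).2]
    rw [mul_max_of_nonneg _ _ hγ₁0, mul_zero]
  calc hsDiv (γ₁ * γ₂) (∑ x, (p x : ℂ) • ρ x) (∑ x, (q x : ℂ) • σ x)
      ≤ ∑ x, (posPartTrace (A x) + posPartTrace (B x)) := step1
    _ = ∑ x, p x * hsDiv γ₁ (ρ x) (σ x) + γ₁ * ∑ x, max (p x - γ₂ * q x) 0 := by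
        rw [Finset.sum_add_distrib, Finset.mul_sum]
        congr 1
        · exact Finset.sum_congr rfl fun x _ => hA_eq x
        · exact Finset.sum_congr rfl fun x _ => hB_eq x
end

section
/- Subadditivity of the hockey-stick divergence under tensor products: for any density operators ρ₁, σ₁ on one finite-dimensional system and ρ₂, σ₂ on another, and any γ₁, γ₂ ≥ 1, both E_{γ₁γ₂}(ρ₁⊗ρ₂ ‖ σ₁⊗σ₂) ≤ E_{γ₁}(ρ₁‖σ₁) + γ₁·E_{γ₂}(ρ₂‖σ₂) and E_{γ₁γ₂}(ρ₁⊗ρ₂ ‖ σ₁⊗σ₂) ≤ E_{γ₁}(ρ₂‖σ₂) + γ₁·E_{γ₂}(ρ₁‖σ₁) hold. -/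
open scoped BigOperators ComplexOrder

set_option linter.unusedSectionVars false

namespace HSaux
open Matrix
open Kronecker

variable {n m : Type*} [Fintype n] [DecidableEq n] [Fintype m] [DecidableEq m]

lemma conjTranspose_kron (A : Matrix n n ℂ) (B : Matrix m m ℂ) :
    (A ⊗ₖ B)ᴴ = Aᴴ ⊗ₖ Bᴴ := by
  ext i k
  simp [conjTranspose_apply, kroneckerMap_apply, mul_comm]

lemma isHermitian_kron {A : Matrix n n ℂ} {B : Matrix m m ℂ}
    (hA : A.IsHermitian) (hB : B.IsHermitian) : (A ⊗ₖ B).IsHermitian := by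
  unfold Matrix.IsHermitian at *
  rw [conjTranspose_kron, hA, hB]

lemma posSemidef_kron {A : Matrix n n ℂ} {B : Matrix m m ℂ}
    (hA : A.PosSemidef) (hB : B.PosSemidef) : (A ⊗ₖ B).PosSemidef := by
  obtain ⟨C, rfl⟩ : ∃ C : Matrix n n ℂ, A = Cᴴ * C := by
    open scoped MatrixOrder in exact CStarAlgebra.nonneg_iff_eq_star_mul_self.mp hA.nonneg
  obtain ⟨D, rfl⟩ : ∃ D : Matrix m m ℂ, B = Dᴴ * D := by
    open scoped MatrixOrder in exact CStarAlgebra.nonneg_iff_eq_star_mul_self.mp hB.nonneg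
  rw [Matrix.mul_kronecker_mul, ← conjTranspose_kron]
  exact posSemidef_conjTranspose_mul_self _

lemma posSemidef_one : (1 : Matrix m m ℂ).PosSemidef := by
  rw [← Matrix.diagonal_one]
  exact PosSemidef.diagonal (fun i => zero_le_one)

lemma sub_kron (A B : Matrix n n ℂ) (C : Matrix m m ℂ) :
    (A - B) ⊗ₖ C = A ⊗ₖ C - B ⊗ₖ C := by
  ext i k
  simp [kroneckerMap_apply, sub_mul]

lemma kron_sub (A : Matrix n n ℂ) (B C : Matrix m m ℂ) :
    A ⊗ₖ (B - C) = A ⊗ₖ B - A ⊗ₖ C := by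
  ext i k
  simp [kroneckerMap_apply, mul_sub]

lemma psd_diag_nonneg {Q : Matrix n n ℂ} (hQ : Q.PosSemidef) (i : n) :
    0 ≤ Q i i := by
  exact hQ.diag_nonneg

lemma psd_diag_re_nonneg {Q : Matrix n n ℂ} (hQ : Q.PosSemidef) (i : n) :
    0 ≤ (Q i i).re :=
  (Complex.le_def.mp (psd_diag_nonneg hQ i)).1

/-- Real part of the trace of a product of two PSD matrices is nonnegative. -/
lemma re_trace_mul_nonneg {P M : Matrix n n ℂ} (hP : P.PosSemidef) (hM : M.PosSemidef) :
    0 ≤ ((P * M).trace).re := by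
  obtain ⟨C, rfl⟩ : ∃ C : Matrix n n ℂ, M = Cᴴ * C := by
    open scoped MatrixOrder in exact CStarAlgebra.nonneg_iff_eq_star_mul_self.mp hM.nonneg
  rw [← Matrix.mul_assoc, Matrix.trace_mul_cycle]
  have hpsd := hP.mul_mul_conjTranspose_same C
  rw [Matrix.trace, Complex.re_sum]
  exact Finset.sum_nonneg fun i _ => psd_diag_re_nonneg hpsd i

lemma re_trace_mul_le_trace {P M : Matrix n n ℂ} (hP1 : (1 - P).PosSemidef)
    (hM : M.PosSemidef) : ((P * M).trace).re ≤ (M.trace).re := by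
  have h := re_trace_mul_nonneg hP1 hM
  rw [Matrix.sub_mul, Matrix.one_mul, Matrix.trace_sub, Complex.sub_re] at h
  linarith

/-- conjugated diagonal matrix -/
noncomputable def cdm (U : Matrix n n ℂ) (d : n → ℂ) : Matrix n n ℂ :=
  U * diagonal d * star U

lemma cdm_mul {U : Matrix n n ℂ} (hU : star U * U = 1) (d e : n → ℂ) :
    cdm U d * cdm U e = cdm U (fun i => d i * e i) := by
  unfold cdm
  have h1 : star U * (U * (diagonal e * star U)) = diagonal e * star U := by
    rw [← Matrix.mul_assoc, ← Matrix.mul_assoc, hU, Matrix.one_mul]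
  simp only [Matrix.mul_assoc]
  rw [h1, ← Matrix.mul_assoc (diagonal d), diagonal_mul_diagonal]

lemma trace_cdm {U : Matrix n n ℂ} (hU : star U * U = 1) (d : n → ℂ) :
    (cdm U d).trace = ∑ i, d i := by
  unfold cdm
  rw [Matrix.trace_mul_cycle, hU, Matrix.one_mul, trace_diagonal]

lemma cdm_psd (U : Matrix n n ℂ) {d : n → ℂ} (hd : ∀ i, 0 ≤ d i) :
    (cdm U d).PosSemidef := by
  have h := (PosSemidef.diagonal (fun i => hd i) : (diagonal d).PosSemidef)
  have := h.mul_mul_conjTranspose_same U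
  unfold cdm
  rwa [Matrix.star_eq_conjTranspose]

lemma cdm_sub (U : Matrix n n ℂ) (d e : n → ℂ) :
    cdm U d - cdm U e = cdm U (fun i => d i - e i) := by
  unfold cdm
  rw [← Matrix.sub_mul, ← Matrix.mul_sub, diagonal_sub]

lemma one_eq_cdm {U : Matrix n n ℂ} (hU' : U * star U = 1) :
    (1 : Matrix n n ℂ) = cdm U (fun _ => 1) := by
  unfold cdm
  rw [diagonal_one, Matrix.mul_one, hU']

lemma trace_mul_diag (M : Matrix n n ℂ) (d : n → ℂ) :
    (M * diagonal d).trace = ∑ i, M i i * d i := by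
  simp [Matrix.trace, Matrix.diag, Matrix.mul_diagonal]

lemma posPartTrace_eq {X : Matrix n n ℂ} (h : X.IsHermitian) :
    posPartTrace X = ∑ i, max (h.eigenvalues i) 0 := by
  rw [posPartTrace, dif_pos h]

lemma star_mul_self_evU {X : Matrix n n ℂ} (h : X.IsHermitian) :
    star (h.eigenvectorUnitary : Matrix n n ℂ) * (h.eigenvectorUnitary : Matrix n n ℂ) = 1 :=
  (Matrix.mem_unitaryGroup_iff').mp h.eigenvectorUnitary.2

lemma mul_star_self_evU {X : Matrix n n ℂ} (h : X.IsHermitian) :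
    (h.eigenvectorUnitary : Matrix n n ℂ) * star (h.eigenvectorUnitary : Matrix n n ℂ) = 1 :=
  (Matrix.mem_unitaryGroup_iff).mp h.eigenvectorUnitary.2

lemma spectral_cdm {X : Matrix n n ℂ} (h : X.IsHermitian) :
    X = cdm (h.eigenvectorUnitary : Matrix n n ℂ)
      (fun i => ((h.eigenvalues i : ℝ) : ℂ)) := by
  have := h.spectral_theorem
  unfold cdm
  convert this using 3
  rw [Unitary.conjStarAlgAut_apply]; rfl

/-- Key variational bound: for `0 ≤ P ≤ 1`, `Re Tr(P X) ≤ Tr X₊`. -/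
lemma re_trace_mul_le {X P : Matrix n n ℂ} (h : X.IsHermitian)
    (hP : P.PosSemidef) (hP1 : (1 - P).PosSemidef) :
    ((P * X).trace).re ≤ posPartTrace X := by
  set U := (h.eigenvectorUnitary : Matrix n n ℂ) with hUdef
  have hU : star U * U = 1 := star_mul_self_evU h
  have hXs : X = cdm U (fun i => ((h.eigenvalues i : ℝ) : ℂ)) := spectral_cdm h
  have h1 : (P * X).trace = ∑ i, (star U * P * U) i i * ((h.eigenvalues i : ℝ) : ℂ) := by
    have e1 : (P * X).trace = (P * cdm U (fun i => ((h.eigenvalues i : ℝ) : ℂ))).trace :=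
      congrArg (fun M => (P * M).trace) hXs
    rw [e1]
    unfold cdm
    rw [← Matrix.mul_assoc, Matrix.trace_mul_comm, ← Matrix.mul_assoc, ← Matrix.mul_assoc,
      trace_mul_diag]
  have hQ : (star U * P * U).PosSemidef := by
    have := hP.conjTranspose_mul_mul_same U
    rwa [← Matrix.star_eq_conjTranspose] at this
  have hQ1 : ((1 : Matrix n n ℂ) - star U * P * U).PosSemidef := by
    have := hP1.conjTranspose_mul_mul_same U
    rw [← Matrix.star_eq_conjTranspose] at this
    have e2 : star U * (1 - P) * U = 1 - star U * P * U := by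
      rw [Matrix.mul_sub, Matrix.mul_one, Matrix.sub_mul, hU]
    rwa [e2] at this
  rw [h1, Complex.re_sum, posPartTrace_eq h]
  refine Finset.sum_le_sum fun i _ => ?_
  have hq0 : 0 ≤ ((star U * P * U) i i).re := psd_diag_re_nonneg hQ i
  have hq1 : ((star U * P * U) i i).re ≤ 1 := by
    have := psd_diag_re_nonneg hQ1 i
    rw [Matrix.sub_apply, Matrix.one_apply_eq, Complex.sub_re, Complex.one_re] at this
    linarith
  have hterm : (((star U * P * U) i i) * ((h.eigenvalues i : ℝ) : ℂ)).re
      = ((star U * P * U) i i).re * h.eigenvalues i := by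
    simp [Complex.mul_re]
  rw [hterm]
  nlinarith [le_max_left (h.eigenvalues i) 0, le_max_right (h.eigenvalues i) 0]

/-- The positive part trace is attained by a projection. -/
lemma proj_spec {X : Matrix n n ℂ} (h : X.IsHermitian) :
    ∃ P : Matrix n n ℂ, P.PosSemidef ∧ (1 - P).PosSemidef ∧
      (P * X).trace = ((posPartTrace X : ℝ) : ℂ) := by
  set U := (h.eigenvectorUnitary : Matrix n n ℂ) with hUdef
  have hU : star U * U = 1 := star_mul_self_evU h
  have hU' : U * star U = 1 := mul_star_self_evU h
  set e : n → ℂ := fun i => if 0 ≤ h.eigenvalues i then 1 else 0 with he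
  refine ⟨cdm U e, cdm_psd _ fun i => ?_, ?_, ?_⟩
  · by_cases hi : 0 ≤ h.eigenvalues i <;> simp [he, hi]
  · rw [one_eq_cdm hU', cdm_sub]
    refine cdm_psd _ fun i => ?_
    by_cases hi : 0 ≤ h.eigenvalues i <;> simp [he, hi]
  · have hXs : X = cdm U (fun i => ((h.eigenvalues i : ℝ) : ℂ)) := spectral_cdm h
    have e1 : (cdm U e * X).trace
        = (cdm U e * cdm U (fun i => ((h.eigenvalues i : ℝ) : ℂ))).trace :=
      congrArg (fun M => (cdm U e * M).trace) hXs
    rw [e1, cdm_mul hU, trace_cdm hU, posPartTrace_eq h]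
    push_cast
    refine Finset.sum_congr rfl fun i _ => ?_
    by_cases hi : 0 ≤ h.eigenvalues i
    · simp [he, hi, max_eq_left hi]
    · simp [he, hi, max_eq_right (le_of_not_ge hi)]

/-- Subadditivity of the positive part trace. -/
lemma posPartTrace_add_le {X Y : Matrix n n ℂ} (hX : X.IsHermitian) (hY : Y.IsHermitian) :
    posPartTrace (X + Y) ≤ posPartTrace X + posPartTrace Y := by
  obtain ⟨P, hP, hP1, hPeq⟩ := proj_spec (hX.add hY)
  have h1 := congrArg Complex.re hPeq
  rw [Matrix.mul_add, Matrix.trace_add, Complex.add_re, Complex.ofReal_re] at h1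
  rw [← h1]
  exact add_le_add (re_trace_mul_le hX hP hP1) (re_trace_mul_le hY hP hP1)

/-- Positive part trace of `A ⊗ₖ B` with `A` Hermitian and `B` PSD. -/
lemma posPartTrace_kron_right {A : Matrix n n ℂ} {B : Matrix m m ℂ}
    (hA : A.IsHermitian) (hB : B.PosSemidef) :
    posPartTrace (A ⊗ₖ B) = posPartTrace A * (B.trace).re := by
  have hK : (A ⊗ₖ B).IsHermitian := isHermitian_kron hA hB.1
  set U := (hA.eigenvectorUnitary : Matrix n n ℂ) with hUdef
  have hU : star U * U = 1 := star_mul_self_evU hA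
  set dP : n → ℂ := fun i => ((max (hA.eigenvalues i) 0 : ℝ) : ℂ) with hdP
  set dN : n → ℂ := fun i => ((max (-hA.eigenvalues i) 0 : ℝ) : ℂ) with hdN
  have hApos : (cdm U dP).PosSemidef :=
    cdm_psd _ fun i => Complex.zero_le_real.mpr (le_max_right _ _)
  have hAneg : (cdm U dN).PosSemidef :=
    cdm_psd _ fun i => Complex.zero_le_real.mpr (le_max_right _ _)
  have hsplit : A = cdm U dP - cdm U dN := by
    rw [cdm_sub]
    have hfun : (fun i => dP i - dN i) = fun i => ((hA.eigenvalues i : ℝ) : ℂ) := by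
      funext i
      rcases le_total 0 (hA.eigenvalues i) with hl | hl
      · simp [hdP, hdN, max_eq_left hl, max_eq_right (neg_nonpos.mpr hl)]
      · simp only [hdP, hdN, max_eq_right hl, max_eq_left (neg_nonneg.mpr hl)]
        push_cast
        ring
    rw [hfun]
    exact spectral_cdm hA
  have hTrApos : (cdm U dP).trace = ((posPartTrace A : ℝ) : ℂ) := by
    rw [trace_cdm hU, posPartTrace_eq hA]
    push_cast
    rfl
  -- upper bound
  obtain ⟨P, hP, hP1, hPeq⟩ := proj_spec hK
  have hPre : ((P * (A ⊗ₖ B)).trace).re = posPartTrace (A ⊗ₖ B) := by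
    rw [hPeq, Complex.ofReal_re]
  have upper : posPartTrace (A ⊗ₖ B) ≤ posPartTrace A * (B.trace).re := by
    rw [← hPre]
    have hsplitK : A ⊗ₖ B = (cdm U dP) ⊗ₖ B - (cdm U dN) ⊗ₖ B := by
      rw [← sub_kron, ← hsplit]
    have e1 : (P * (A ⊗ₖ B)).trace
        = (P * (cdm U dP ⊗ₖ B)).trace - (P * (cdm U dN ⊗ₖ B)).trace := by
      rw [congrArg (fun M => (P * M).trace) hsplitK, Matrix.mul_sub, Matrix.trace_sub]
    rw [e1, Complex.sub_re]
    have b1 : ((P * (cdm U dP ⊗ₖ B)).trace).re ≤ ((cdm U dP ⊗ₖ B).trace).re :=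
      re_trace_mul_le_trace hP1 (posSemidef_kron hApos hB)
    have b2 : 0 ≤ ((P * (cdm U dN ⊗ₖ B)).trace).re :=
      re_trace_mul_nonneg hP (posSemidef_kron hAneg hB)
    have b3 : ((cdm U dP ⊗ₖ B).trace).re = posPartTrace A * (B.trace).re := by
      rw [Matrix.trace_kronecker, hTrApos, Complex.re_ofReal_mul]
    linarith
  -- lower bound
  obtain ⟨Q, hQ, hQ1, hQeq⟩ := proj_spec hA
  have hP' : ((Q ⊗ₖ (1 : Matrix m m ℂ))).PosSemidef := posSemidef_kron hQ posSemidef_one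
  have hP'1 : ((1 : Matrix (n × m) (n × m) ℂ) - Q ⊗ₖ (1 : Matrix m m ℂ)).PosSemidef := by
    rw [← Matrix.one_kronecker_one, ← sub_kron]
    exact posSemidef_kron hQ1 posSemidef_one
  have lower : posPartTrace A * (B.trace).re ≤ posPartTrace (A ⊗ₖ B) := by
    have hle := re_trace_mul_le hK hP' hP'1
    have e2 : (Q ⊗ₖ (1 : Matrix m m ℂ)) * (A ⊗ₖ B) = (Q * A) ⊗ₖ B := by
      rw [← Matrix.mul_kronecker_mul, Matrix.one_mul]
    rw [e2, Matrix.trace_kronecker, hQeq, Complex.re_ofReal_mul] at hle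
    exact hle
  linarith

/-- Positive part trace of `B ⊗ₖ A` with `A` Hermitian and `B` PSD. -/
lemma posPartTrace_kron_left {A : Matrix n n ℂ} {B : Matrix m m ℂ}
    (hA : A.IsHermitian) (hB : B.PosSemidef) :
    posPartTrace (B ⊗ₖ A) = (B.trace).re * posPartTrace A := by
  have hK : (B ⊗ₖ A).IsHermitian := isHermitian_kron hB.1 hA
  set U := (hA.eigenvectorUnitary : Matrix n n ℂ) with hUdef
  have hU : star U * U = 1 := star_mul_self_evU hA
  set dP : n → ℂ := fun i => ((max (hA.eigenvalues i) 0 : ℝ) : ℂ) with hdP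
  set dN : n → ℂ := fun i => ((max (-hA.eigenvalues i) 0 : ℝ) : ℂ) with hdN
  have hApos : (cdm U dP).PosSemidef :=
    cdm_psd _ fun i => Complex.zero_le_real.mpr (le_max_right _ _)
  have hAneg : (cdm U dN).PosSemidef :=
    cdm_psd _ fun i => Complex.zero_le_real.mpr (le_max_right _ _)
  have hsplit : A = cdm U dP - cdm U dN := by
    rw [cdm_sub]
    have hfun : (fun i => dP i - dN i) = fun i => ((hA.eigenvalues i : ℝ) : ℂ) := by
      funext i
      rcases le_total 0 (hA.eigenvalues i) with hl | hl
      · simp [hdP, hdN, max_eq_left hl, max_eq_right (neg_nonpos.mpr hl)]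
      · simp only [hdP, hdN, max_eq_right hl, max_eq_left (neg_nonneg.mpr hl)]
        push_cast
        ring
    rw [hfun]
    exact spectral_cdm hA
  have hTrApos : (cdm U dP).trace = ((posPartTrace A : ℝ) : ℂ) := by
    rw [trace_cdm hU, posPartTrace_eq hA]
    push_cast
    rfl
  -- upper bound
  obtain ⟨P, hP, hP1, hPeq⟩ := proj_spec hK
  have hPre : ((P * (B ⊗ₖ A)).trace).re = posPartTrace (B ⊗ₖ A) := by
    rw [hPeq, Complex.ofReal_re]
  have upper : posPartTrace (B ⊗ₖ A) ≤ (B.trace).re * posPartTrace A := by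
    rw [← hPre]
    have hsplitK : B ⊗ₖ A = B ⊗ₖ (cdm U dP) - B ⊗ₖ (cdm U dN) := by
      rw [← kron_sub, ← hsplit]
    have e1 : (P * (B ⊗ₖ A)).trace
        = (P * (B ⊗ₖ cdm U dP)).trace - (P * (B ⊗ₖ cdm U dN)).trace := by
      rw [congrArg (fun M => (P * M).trace) hsplitK, Matrix.mul_sub, Matrix.trace_sub]
    rw [e1, Complex.sub_re]
    have b1 : ((P * (B ⊗ₖ cdm U dP)).trace).re ≤ ((B ⊗ₖ cdm U dP).trace).re :=
      re_trace_mul_le_trace hP1 (posSemidef_kron hB hApos)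
    have b2 : 0 ≤ ((P * (B ⊗ₖ cdm U dN)).trace).re :=
      re_trace_mul_nonneg hP (posSemidef_kron hB hAneg)
    have b3 : ((B ⊗ₖ cdm U dP).trace).re = (B.trace).re * posPartTrace A := by
      rw [Matrix.trace_kronecker, hTrApos]
      rw [mul_comm, Complex.re_ofReal_mul, mul_comm]
    linarith
  -- lower bound
  obtain ⟨Q, hQ, hQ1, hQeq⟩ := proj_spec hA
  have hP' : (((1 : Matrix m m ℂ) ⊗ₖ Q)).PosSemidef := posSemidef_kron posSemidef_one hQ
  have hP'1 : ((1 : Matrix (m × n) (m × n) ℂ) - (1 : Matrix m m ℂ) ⊗ₖ Q).PosSemidef := by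
    rw [← Matrix.one_kronecker_one, ← kron_sub]
    exact posSemidef_kron posSemidef_one hQ1
  have lower : (B.trace).re * posPartTrace A ≤ posPartTrace (B ⊗ₖ A) := by
    have hle := re_trace_mul_le hK hP' hP'1
    have e2 : ((1 : Matrix m m ℂ) ⊗ₖ Q) * (B ⊗ₖ A) = B ⊗ₖ (Q * A) := by
      rw [← Matrix.mul_kronecker_mul, Matrix.one_mul]
    rw [e2, Matrix.trace_kronecker, hQeq] at hle
    rw [mul_comm (B.trace), Complex.re_ofReal_mul, mul_comm] at hle
    exact hle
  linarith

lemma real_smul_herm {M : Matrix n n ℂ} (hM : M.IsHermitian) (c : ℝ) :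
    ((c : ℂ) • M).IsHermitian := by
  unfold Matrix.IsHermitian at *
  rw [Matrix.conjTranspose_smul, hM, Complex.star_def, Complex.conj_ofReal]

lemma real_smul_psd {M : Matrix n n ℂ} (hM : M.PosSemidef) {c : ℝ} (hc : 0 ≤ c) :
    ((c : ℂ) • M).PosSemidef := by
  refine ⟨real_smul_herm hM.1 c, fun x => ?_⟩
  exact (hM.smul (Complex.zero_le_real.mpr hc)).2 x

end HSaux

open Kronecker in
/-- Subadditivity of the hockey-stick divergence under tensor (Kronecker) products. -/
theorem hsDiv_kronecker_subadditive {d₁ d₂ : ℕ}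
    (ρ₁ σ₁ : Matrix (Fin d₁) (Fin d₁) ℂ) (ρ₂ σ₂ : Matrix (Fin d₂) (Fin d₂) ℂ)
    (hρ₁ : IsDensity ρ₁) (hσ₁ : IsDensity σ₁)
    (hρ₂ : IsDensity ρ₂) (hσ₂ : IsDensity σ₂)
    (γ₁ γ₂ : ℝ) (hγ₁ : 1 ≤ γ₁) (hγ₂ : 1 ≤ γ₂) :
    hsDiv (γ₁ * γ₂) (ρ₁ ⊗ₖ ρ₂) (σ₁ ⊗ₖ σ₂) ≤ hsDiv γ₁ ρ₁ σ₁ + γ₁ * hsDiv γ₂ ρ₂ σ₂ ∧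
    hsDiv (γ₁ * γ₂) (ρ₁ ⊗ₖ ρ₂) (σ₁ ⊗ₖ σ₂) ≤ hsDiv γ₁ ρ₂ σ₂ + γ₁ * hsDiv γ₂ ρ₁ σ₁ := by
  have hγ₁0 : (0 : ℝ) ≤ γ₁ := le_trans zero_le_one hγ₁
  have hγ₂0 : (0 : ℝ) ≤ γ₂ := le_trans zero_le_one hγ₂
  -- Hermitian differences
  have hX₁ : (ρ₁ - (γ₁ : ℂ) • σ₁).IsHermitian :=
    hρ₁.1.1.sub (HSaux.real_smul_herm hσ₁.1.1 γ₁)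
  have hX₂ : (ρ₂ - (γ₂ : ℂ) • σ₂).IsHermitian :=
    hρ₂.1.1.sub (HSaux.real_smul_herm hσ₂.1.1 γ₂)
  have hY₂ : (ρ₂ - (γ₁ : ℂ) • σ₂).IsHermitian :=
    hρ₂.1.1.sub (HSaux.real_smul_herm hσ₂.1.1 γ₁)
  have hY₁ : (ρ₁ - (γ₂ : ℂ) • σ₁).IsHermitian :=
    hρ₁.1.1.sub (HSaux.real_smul_herm hσ₁.1.1 γ₂)
  have hγσ₁ : ((γ₁ : ℂ) • σ₁).PosSemidef := HSaux.real_smul_psd hσ₁.1 hγ₁0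
  have hγσ₂ : ((γ₁ : ℂ) • σ₂).PosSemidef := HSaux.real_smul_psd hσ₂.1 hγ₁0
  have hcast : (((γ₁ * γ₂ : ℝ)) : ℂ) = (γ₁ : ℂ) * (γ₂ : ℂ) := by push_cast; ring
  have htrρ₂ : (ρ₂.trace).re = 1 := by rw [hρ₂.2]; simp
  have htrρ₁ : (ρ₁.trace).re = 1 := by rw [hρ₁.2]; simp
  have htrγσ₁ : (((γ₁ : ℂ) • σ₁).trace).re = γ₁ := by
    rw [Matrix.trace_smul, hσ₁.2, smul_eq_mul, mul_one, Complex.ofReal_re]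
  have htrγσ₂ : (((γ₁ : ℂ) • σ₂).trace).re = γ₁ := by
    rw [Matrix.trace_smul, hσ₂.2, smul_eq_mul, mul_one, Complex.ofReal_re]
  constructor
  · -- first decomposition
    have key : ρ₁ ⊗ₖ ρ₂ - (((γ₁ * γ₂ : ℝ)) : ℂ) • (σ₁ ⊗ₖ σ₂)
        = (ρ₁ - (γ₁ : ℂ) • σ₁) ⊗ₖ ρ₂ + ((γ₁ : ℂ) • σ₁) ⊗ₖ (ρ₂ - (γ₂ : ℂ) • σ₂) := by
      rw [hcast, HSaux.sub_kron, HSaux.kron_sub, Matrix.smul_kronecker,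
        Matrix.smul_kronecker, Matrix.kronecker_smul, smul_smul]
      abel
    unfold hsDiv
    rw [key]
    calc posPartTrace ((ρ₁ - (γ₁ : ℂ) • σ₁) ⊗ₖ ρ₂
          + ((γ₁ : ℂ) • σ₁) ⊗ₖ (ρ₂ - (γ₂ : ℂ) • σ₂))
        ≤ posPartTrace ((ρ₁ - (γ₁ : ℂ) • σ₁) ⊗ₖ ρ₂)
          + posPartTrace (((γ₁ : ℂ) • σ₁) ⊗ₖ (ρ₂ - (γ₂ : ℂ) • σ₂)) :=
          HSaux.posPartTrace_add_le (HSaux.isHermitian_kron hX₁ hρ₂.1.1)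
            (HSaux.isHermitian_kron hγσ₁.1 hX₂)
      _ = posPartTrace (ρ₁ - (γ₁ : ℂ) • σ₁) * (ρ₂.trace).re
          + (((γ₁ : ℂ) • σ₁).trace).re * posPartTrace (ρ₂ - (γ₂ : ℂ) • σ₂) := by
          rw [HSaux.posPartTrace_kron_right hX₁ hρ₂.1, HSaux.posPartTrace_kron_left hX₂ hγσ₁]
      _ = posPartTrace (ρ₁ - (γ₁ : ℂ) • σ₁) + γ₁ * posPartTrace (ρ₂ - (γ₂ : ℂ) • σ₂) := by
          rw [htrρ₂, htrγσ₁, mul_one]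
  · -- second decomposition
    have key : ρ₁ ⊗ₖ ρ₂ - (((γ₁ * γ₂ : ℝ)) : ℂ) • (σ₁ ⊗ₖ σ₂)
        = ρ₁ ⊗ₖ (ρ₂ - (γ₁ : ℂ) • σ₂) + (ρ₁ - (γ₂ : ℂ) • σ₁) ⊗ₖ ((γ₁ : ℂ) • σ₂) := by
      rw [hcast, HSaux.kron_sub, HSaux.sub_kron, Matrix.kronecker_smul,
        Matrix.kronecker_smul, Matrix.smul_kronecker, smul_smul]
      abel
    unfold hsDiv
    rw [key]
    calc posPartTrace (ρ₁ ⊗ₖ (ρ₂ - (γ₁ : ℂ) • σ₂)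
          + (ρ₁ - (γ₂ : ℂ) • σ₁) ⊗ₖ ((γ₁ : ℂ) • σ₂))
        ≤ posPartTrace (ρ₁ ⊗ₖ (ρ₂ - (γ₁ : ℂ) • σ₂))
          + posPartTrace ((ρ₁ - (γ₂ : ℂ) • σ₁) ⊗ₖ ((γ₁ : ℂ) • σ₂)) :=
          HSaux.posPartTrace_add_le (HSaux.isHermitian_kron hρ₁.1.1 hY₂)
            (HSaux.isHermitian_kron hY₁ hγσ₂.1)
      _ = (ρ₁.trace).re * posPartTrace (ρ₂ - (γ₁ : ℂ) • σ₂)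
          + posPartTrace (ρ₁ - (γ₂ : ℂ) • σ₁) * (((γ₁ : ℂ) • σ₂).trace).re := by
          rw [HSaux.posPartTrace_kron_left hY₂ hρ₁.1, HSaux.posPartTrace_kron_right hY₁ hγσ₂]
      _ = posPartTrace (ρ₂ - (γ₁ : ℂ) • σ₂) + γ₁ * posPartTrace (ρ₁ - (γ₂ : ℂ) • σ₁) := by
          rw [htrρ₁, htrγσ₂, one_mul, mul_comm]
end

section
/- Trace bound for the hockey-stick divergence: for any density operators ρ, σ, τ on a finite-dimensional complex Hilbert space and any γ ≥ 1, E_γ(ρ‖σ) + E_γ(ρ‖τ) ≥ (γ/2)·‖τ − σ‖₁ + (1−γ). -/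
open scoped BigOperators ComplexOrder

namespace HSProof

open Matrix
open scoped MatrixOrder

variable {n : Type*} [Fintype n] [DecidableEq n]

/-- Conjugation of a function through the spectral decomposition of a Hermitian matrix. -/
noncomputable def conj {A : Matrix n n ℂ} (hA : A.IsHermitian) (f : ℝ → ℝ) : Matrix n n ℂ :=
  (hA.eigenvectorUnitary : Matrix n n ℂ) *
    Matrix.diagonal (RCLike.ofReal ∘ f ∘ hA.eigenvalues) *
    star (hA.eigenvectorUnitary : Matrix n n ℂ)

lemma star_mul_self_unitary {A : Matrix n n ℂ} (hA : A.IsHermitian) :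
    star (hA.eigenvectorUnitary : Matrix n n ℂ) * (hA.eigenvectorUnitary : Matrix n n ℂ) = 1 :=
  Matrix.mem_unitaryGroup_iff'.mp hA.eigenvectorUnitary.2

lemma mul_self_star_unitary {A : Matrix n n ℂ} (hA : A.IsHermitian) :
    (hA.eigenvectorUnitary : Matrix n n ℂ) * star (hA.eigenvectorUnitary : Matrix n n ℂ) = 1 :=
  Matrix.mem_unitaryGroup_iff.mp hA.eigenvectorUnitary.2

lemma conj_id {A : Matrix n n ℂ} (hA : A.IsHermitian) : conj hA id = A := by
  rw [conj]
  exact hA.spectral_theorem.symm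

lemma conj_mul {A : Matrix n n ℂ} (hA : A.IsHermitian) (f g : ℝ → ℝ) :
    conj hA f * conj hA g = conj hA (fun x => f x * g x) := by
  have hd : (Matrix.diagonal (RCLike.ofReal ∘ f ∘ hA.eigenvalues) : Matrix n n ℂ) *
      Matrix.diagonal (RCLike.ofReal ∘ g ∘ hA.eigenvalues)
      = Matrix.diagonal (RCLike.ofReal ∘ (fun x => f x * g x) ∘ hA.eigenvalues) := by
    rw [Matrix.diagonal_mul_diagonal]
    ext i j
    by_cases h : i = j <;> simp [h]
  simp only [conj, Matrix.mul_assoc]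
  rw [← Matrix.mul_assoc (star (hA.eigenvectorUnitary : Matrix n n ℂ))
      (hA.eigenvectorUnitary : Matrix n n ℂ), star_mul_self_unitary hA, Matrix.one_mul,
    ← Matrix.mul_assoc (Matrix.diagonal (RCLike.ofReal ∘ f ∘ hA.eigenvalues)), hd]

lemma conj_trace {A : Matrix n n ℂ} (hA : A.IsHermitian) (f : ℝ → ℝ) :
    (conj hA f).trace = ∑ i, (f (hA.eigenvalues i) : ℂ) := by
  rw [conj, Matrix.trace_mul_cycle, star_mul_self_unitary hA,
    Matrix.one_mul, Matrix.trace_diagonal]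
  rfl

lemma conj_posSemidef {A : Matrix n n ℂ} (hA : A.IsHermitian) {f : ℝ → ℝ}
    (hf : ∀ x, 0 ≤ f x) : (conj hA f).PosSemidef := by
  have hd : (Matrix.diagonal (RCLike.ofReal ∘ f ∘ hA.eigenvalues) : Matrix n n ℂ).PosSemidef :=
    Matrix.posSemidef_diagonal_iff.mpr fun i => by
      simpa using hf (hA.eigenvalues i)
  have := hd.mul_mul_conjTranspose_same (hA.eigenvectorUnitary : Matrix n n ℂ)
  simpa [conj, Matrix.star_eq_conjTranspose] using this

lemma conj_one {A : Matrix n n ℂ} (hA : A.IsHermitian) : conj hA (fun _ => 1) = 1 := by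
  rw [conj]
  have : Matrix.diagonal (RCLike.ofReal ∘ (fun _ : ℝ => (1:ℝ)) ∘ hA.eigenvalues)
      = (1 : Matrix n n ℂ) := by
    simp [Function.comp_def, Matrix.diagonal_one]
  rw [this, Matrix.mul_one, mul_self_star_unitary hA]

lemma conj_sub {A : Matrix n n ℂ} (hA : A.IsHermitian) (f g : ℝ → ℝ) :
    conj hA (fun x => f x - g x) = conj hA f - conj hA g := by
  simp only [conj]
  have hd : (Matrix.diagonal (RCLike.ofReal ∘ (fun x => f x - g x) ∘ hA.eigenvalues) : Matrix n n ℂ)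
      = Matrix.diagonal (RCLike.ofReal ∘ f ∘ hA.eigenvalues)
        - Matrix.diagonal (RCLike.ofReal ∘ g ∘ hA.eigenvalues) := by
    rw [Matrix.diagonal_sub]
    ext i j
    by_cases h : i = j <;> simp [h]
  rw [hd, Matrix.mul_sub, Matrix.sub_mul]

lemma diag_entry_nonneg {M : Matrix n n ℂ} (hM : M.PosSemidef) (i : n) :
    0 ≤ (M i i).re := by
  have h := hM.dotProduct_mulVec_nonneg (Pi.single i 1)
  have h2 : (0:ℂ) ≤ M i i := by
    have hs : star (Pi.single i (1:ℂ) : n → ℂ) = Pi.single i 1 := by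
      ext j
      simp [Pi.single_apply, apply_ite]
    simpa [hs, single_dotProduct, Matrix.mulVec_single] using h
  exact (Complex.le_def.mp h2).1

/-- Duality bound: if `0 ≤ Q ≤ 1` then `Re Tr(Q A) ≤ Tr A₊` for Hermitian `A`. -/
lemma re_trace_mul_le_posPartTrace {A : Matrix n n ℂ} (hA : A.IsHermitian)
    {Q : Matrix n n ℂ} (hQ : Q.PosSemidef) (hQ1 : (1 - Q).PosSemidef) :
    ((Q * A).trace).re ≤ posPartTrace A := by
  classical
  set U : Matrix n n ℂ := (hA.eigenvectorUnitary : Matrix n n ℂ) with hU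
  set M : Matrix n n ℂ := star U * Q * U with hMdef
  have hMp : M.PosSemidef := by
    have := hQ.mul_mul_conjTranspose_same (star U)
    simpa [hMdef, Matrix.star_eq_conjTranspose, Matrix.conjTranspose_conjTranspose] using this
  have hM1p : (1 - M).PosSemidef := by
    have := hQ1.mul_mul_conjTranspose_same (star U)
    have e : star U * (1 - Q) * (star U)ᴴ = 1 - M := by
      rw [← Matrix.star_eq_conjTranspose, star_star, Matrix.mul_sub, Matrix.mul_one,
        Matrix.sub_mul, star_mul_self_unitary hA, hMdef]
    rwa [e] at this
  have htr : (Q * A).trace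
      = (M * Matrix.diagonal (RCLike.ofReal ∘ hA.eigenvalues)).trace := by
    conv_lhs => rw [hA.spectral_theorem, Unitary.conjStarAlgAut_apply]
    rw [← hU, ← Matrix.mul_assoc, ← Matrix.mul_assoc,
      Matrix.trace_mul_cycle (Q * U) (Matrix.diagonal (RCLike.ofReal ∘ hA.eigenvalues)) (star U),
      ← Matrix.mul_assoc, hMdef, Matrix.mul_assoc (star U) Q U]
  rw [htr]
  have htr2 : (M * Matrix.diagonal (RCLike.ofReal ∘ hA.eigenvalues)).trace
      = ∑ i, M i i * (hA.eigenvalues i : ℂ) := by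
    simp [Matrix.trace, Matrix.diag, Matrix.mul_diagonal, Function.comp]
  rw [htr2, Complex.re_sum, posPartTrace, dif_pos hA]
  refine Finset.sum_le_sum fun i _ => ?_
  have h1 : ((M i i) * (hA.eigenvalues i : ℂ)).re = (M i i).re * hA.eigenvalues i := by
    simp [Complex.mul_re]
  rw [h1]
  have h2 : 0 ≤ (M i i).re := diag_entry_nonneg hMp i
  have h3 : (M i i).re ≤ 1 := by
    have := diag_entry_nonneg hM1p i
    have e : ((1 - M) i i).re = 1 - (M i i).re := by
      simp [Matrix.sub_apply, Matrix.one_apply]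
    rw [e] at this
    linarith
  rcases le_or_gt 0 (hA.eigenvalues i) with hev | hev
  · calc (M i i).re * hA.eigenvalues i ≤ 1 * hA.eigenvalues i := by nlinarith
      _ = hA.eigenvalues i := one_mul _
      _ ≤ max (hA.eigenvalues i) 0 := le_max_left _ _
  · calc (M i i).re * hA.eigenvalues i ≤ 0 := by nlinarith
      _ ≤ max (hA.eigenvalues i) 0 := le_max_right _ _

lemma sqrt_eq_conj {B : Matrix n n ℂ} (hB : B.PosSemidef) :
    CFC.sqrt B = conj hB.1 Real.sqrt := by
  rw [CFC.sqrt_eq_cfc, cfc_nnreal_eq_real _ B, hB.1.cfc_eq]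
  have hf : (fun x : ℝ => ((NNReal.sqrt x.toNNReal : NNReal) : ℝ)) = Real.sqrt := by
    funext x
    rw [Real.coe_sqrt, Real.coe_toNNReal']
    rcases le_total 0 x with h | h
    · rw [max_eq_left h]
    · rw [max_eq_right h, Real.sqrt_zero, Real.sqrt_eq_zero_of_nonpos h]
  rw [hf]
  rfl

lemma traceNorm_eq_sum_abs {A : Matrix n n ℂ} (hA : A.IsHermitian) :
    traceNorm A = ∑ i, |hA.eigenvalues i| := by
  have hM := Matrix.posSemidef_conjTranspose_mul_self A
  have habs : (conj hA fun x => |x|).PosSemidef :=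
    conj_posSemidef hA (fun x => abs_nonneg x)
  have hsq : (conj hA fun x => |x|) ^ 2 = Aᴴ * A := by
    rw [pow_two, conj_mul hA]
    have e1 : (fun x : ℝ => |x| * |x|) = fun x : ℝ => x * x := by
      funext x
      exact abs_mul_abs_self x
    rw [e1]
    have e2 : conj hA (fun x : ℝ => x * x) = conj hA id * conj hA id :=
      (conj_mul hA id id).symm
    rw [e2, conj_id hA, hA.eq]
  have heq : conj hA (fun x => |x|) = CFC.sqrt (Aᴴ * A) :=
    ((CFC.sqrt_eq_iff _ _ hM.nonneg habs.nonneg).mpr (by rw [← sq]; exact hsq)).symm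
  have t1 : (conj hA fun x => |x|).trace = ∑ i, ((|hA.eigenvalues i| : ℝ) : ℂ) := conj_trace hA _
  have t2 : (CFC.sqrt (Aᴴ * A)).trace = ∑ i, (Real.sqrt (hM.1.eigenvalues i) : ℂ) := by
    rw [sqrt_eq_conj hM]
    exact conj_trace hM.1 _
  have key : (∑ i, ((|hA.eigenvalues i| : ℝ) : ℂ)) = ∑ i, (Real.sqrt (hM.1.eigenvalues i) : ℂ) := by
    rw [← t1, heq, t2]
  have key2 : (∑ i, |hA.eigenvalues i|) = ∑ i, Real.sqrt (hM.1.eigenvalues i) := by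
    have := congrArg Complex.re key
    simpa [Complex.re_sum] using this
  rw [traceNorm, ← key2]

end HSProof

/-- Trace bound for the hockey-stick divergence. -/
theorem hsDiv_trace_bound {d : ℕ} (ρ σ τ : Matrix (Fin d) (Fin d) ℂ)
    (hρ : IsDensity ρ) (hσ : IsDensity σ) (hτ : IsDensity τ)
    (γ : ℝ) (hγ : 1 ≤ γ) :
    (γ / 2) * traceNorm (τ - σ) + (1 - γ) ≤ hsDiv γ ρ σ + hsDiv γ ρ τ := by
  classical
  obtain ⟨hρp, hρ1⟩ := hρ
  obtain ⟨hσp, hσ1⟩ := hσ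
  obtain ⟨hτp, hτ1⟩ := hτ
  have hsmul : ∀ M : Matrix (Fin d) (Fin d) ℂ, M.IsHermitian → ((γ:ℂ) • M).IsHermitian := by
    intro M hM
    rw [Matrix.IsHermitian, Matrix.conjTranspose_smul, hM.eq]
    congr 1
    simp [Complex.star_def, Complex.conj_ofReal]
  have hAH : (ρ - (γ:ℂ) • σ).IsHermitian := hρp.1.sub (hsmul σ hσp.1)
  have hBH : (ρ - (γ:ℂ) • τ).IsHermitian := hρp.1.sub (hsmul τ hτp.1)
  have hXH : (τ - σ).IsHermitian := hτp.1.sub hσp.1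
  set q : ℝ → ℝ := fun x => if 0 < x then 1 else 0 with hq
  have hqnn : ∀ x, 0 ≤ q x := fun x => by by_cases h : 0 < x <;> simp [hq, h]
  have hqnn1 : ∀ x, 0 ≤ 1 - q x := fun x => by by_cases h : 0 < x <;> simp [hq, h]
  set Q : Matrix (Fin d) (Fin d) ℂ := HSProof.conj hXH q with hQdef
  have hQp : Q.PosSemidef := HSProof.conj_posSemidef hXH hqnn
  have h1Q : HSProof.conj hXH (fun x => 1 - q x) = 1 - Q := by
    have h1 : HSProof.conj hXH (fun x => 1 - q x)
        = HSProof.conj hXH (fun _ => 1) - HSProof.conj hXH q := HSProof.conj_sub hXH _ _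
    rw [HSProof.conj_one hXH] at h1
    exact h1
  have hQ1p : (1 - Q).PosSemidef := by
    rw [← h1Q]
    exact HSProof.conj_posSemidef hXH hqnn1
  have k1 : ((Q * (ρ - (γ:ℂ) • σ)).trace).re ≤ hsDiv γ ρ σ :=
    HSProof.re_trace_mul_le_posPartTrace hAH hQp hQ1p
  have k2 : (((1 - Q) * (ρ - (γ:ℂ) • τ)).trace).re ≤ hsDiv γ ρ τ := by
    refine HSProof.re_trace_mul_le_posPartTrace hBH hQ1p ?_
    rw [sub_sub_cancel]
    exact hQp
  -- trace algebra
  have tsum : (Q * (ρ - (γ:ℂ) • σ)).trace + ((1 - Q) * (ρ - (γ:ℂ) • τ)).trace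
      = (γ:ℂ) * (Q * (τ - σ)).trace + (ρ - (γ:ℂ) • τ).trace := by
    rw [Matrix.sub_mul, Matrix.one_mul, Matrix.trace_sub]
    have e : Q * (ρ - (γ:ℂ) • σ) - Q * (ρ - (γ:ℂ) • τ) = (γ:ℂ) • (Q * (τ - σ)) := by
      rw [← Matrix.mul_sub, ← Matrix.mul_smul]
      congr 1
      rw [smul_sub]
      abel
    have e2 : (Q * (ρ - (γ:ℂ) • σ)).trace - (Q * (ρ - (γ:ℂ) • τ)).trace
        = (γ:ℂ) * (Q * (τ - σ)).trace := by
      rw [← Matrix.trace_sub, e, Matrix.trace_smul, smul_eq_mul]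
    linear_combination e2
  -- the positive part of τ - σ
  have hQX : Q * (τ - σ) = HSProof.conj hXH (fun x => q x * x) := by
    have h1 := HSProof.conj_mul hXH q id
    rw [HSProof.conj_id hXH] at h1
    exact h1
  have hfun : (fun x : ℝ => q x * x) = fun x : ℝ => max x 0 := by
    funext x
    by_cases h : 0 < x
    · simp [hq, h, max_eq_left h.le]
    · simp [hq, h, max_eq_right (not_lt.mp h)]
  have reQX : ((Q * (τ - σ)).trace).re = ∑ i, max (hXH.eigenvalues i) 0 := by
    rw [hQX, hfun, HSProof.conj_trace hXH]
    simp [Complex.re_sum]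
  have reB : ((ρ - (γ:ℂ) • τ).trace).re = 1 - γ := by
    rw [Matrix.trace_sub, Matrix.trace_smul, hρ1, hτ1]
    simp
  -- trace norm identity
  have hsumzero : ∑ i, hXH.eigenvalues i = 0 := by
    have h1 := HSProof.conj_trace hXH id
    rw [HSProof.conj_id hXH] at h1
    have h2 : (τ - σ).trace = 0 := by rw [Matrix.trace_sub, hτ1, hσ1, sub_self]
    have h3 := congrArg Complex.re (h1.symm.trans h2)
    simpa [Complex.re_sum] using h3
  have htn : traceNorm (τ - σ) = 2 * ∑ i, max (hXH.eigenvalues i) 0 := by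
    rw [HSProof.traceNorm_eq_sum_abs hXH]
    have habs : ∀ x : ℝ, |x| = 2 * max x 0 - x := by
      intro x
      rcases le_or_gt 0 x with h | h
      · rw [abs_of_nonneg h, max_eq_left h]; ring
      · rw [abs_of_neg h, max_eq_right h.le]; ring
    calc ∑ i, |hXH.eigenvalues i| = ∑ i, (2 * max (hXH.eigenvalues i) 0 - hXH.eigenvalues i) :=
          Finset.sum_congr rfl fun i _ => habs _
      _ = 2 * (∑ i, max (hXH.eigenvalues i) 0) - ∑ i, hXH.eigenvalues i := by
          rw [Finset.sum_sub_distrib, Finset.mul_sum]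
      _ = 2 * ∑ i, max (hXH.eigenvalues i) 0 := by rw [hsumzero, sub_zero]
  -- put everything together
  have hre := congrArg Complex.re tsum
  have hre' : ((Q * (ρ - (γ:ℂ) • σ)).trace).re + (((1 - Q) * (ρ - (γ:ℂ) • τ)).trace).re
      = γ * (∑ i, max (hXH.eigenvalues i) 0) + (1 - γ) := by
    rw [← reQX, ← reB]
    simpa [Complex.add_re, Complex.mul_re] using hre
  rw [htn]
  have : γ / 2 * (2 * ∑ i, max (hXH.eigenvalues i) 0)
      = γ * ∑ i, max (hXH.eigenvalues i) 0 := by ring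
  rw [this]
  linarith
end

section
/- Measurement-free characterization of differential privacy: for density operators ρ', σ' on a finite-dimensional complex Hilbert space, ε ≥ 0 and δ ≥ 0, the condition 'Tr[M ρ'] ≤ e^ε·Tr[M σ'] + δ for every operator M with 0 ≤ M ≤ I' holds if and only if E_{e^ε}(ρ'‖σ') ≤ δ. -/
open scoped BigOperators ComplexOrder

lemma psd_diag_nonneg {n : Type*} [Fintype n] [DecidableEq n] {N : Matrix n n ℂ}
    (hN : N.PosSemidef) (i : n) : 0 ≤ N i i := by
  exact hN.diag_nonneg

lemma trace_mul_re_le {n : Type*} [Fintype n] [DecidableEq n]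
    {X : Matrix n n ℂ} (hX : X.IsHermitian) (M : Matrix n n ℂ)
    (hM : M.PosSemidef) (hM1 : (1 - M).PosSemidef) :
    (M * X).trace.re ≤ posPartTrace X := by
  set U : Matrix n n ℂ := (hX.eigenvectorUnitary : Matrix n n ℂ)
  have hUU : U * star U = 1 := (Matrix.mem_unitaryGroup_iff).mp hX.eigenvectorUnitary.2
  have hUU' : star U * U = 1 := (Matrix.mem_unitaryGroup_iff').mp hX.eigenvectorUnitary.2
  set N : Matrix n n ℂ := star U * M * U with hNdef
  have hN : N.PosSemidef := by
    simpa [hNdef, Matrix.star_eq_conjTranspose] using hM.conjTranspose_mul_mul_same U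
  have hN1 : (1 - N).PosSemidef := by
    have := hM1.conjTranspose_mul_mul_same U
    have e : Matrix.conjTranspose U * (1 - M) * U = 1 - N := by
      rw [Matrix.mul_sub, Matrix.mul_one, Matrix.sub_mul, ← Matrix.star_eq_conjTranspose,
        hUU', hNdef]
    rwa [e] at this
  have htr : (M * X).trace = (N * Matrix.diagonal (RCLike.ofReal ∘ hX.eigenvalues)).trace := by
    conv_lhs => rw [hX.spectral_theorem, Unitary.conjStarAlgAut_apply]
    rw [hNdef]
    rw [← Matrix.mul_assoc, ← Matrix.mul_assoc, Matrix.trace_mul_comm,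
      ← Matrix.mul_assoc, ← Matrix.mul_assoc]
  rw [htr, posPartTrace, dif_pos hX]
  rw [Matrix.trace]
  simp only [Matrix.diag_apply, Matrix.mul_diagonal, Function.comp_apply]
  rw [Complex.re_sum]
  apply Finset.sum_le_sum
  intro i _
  have h0 : 0 ≤ N i i := psd_diag_nonneg hN i
  have h1 : (N i i).re ≤ 1 := by
    have := psd_diag_nonneg hN1 i
    simp only [Matrix.sub_apply, Matrix.one_apply_eq] at this
    have := (Complex.le_def.mp this).1
    simp at this; linarith
  have h0' : 0 ≤ (N i i).re := (Complex.le_def.mp h0).1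
  have him : (N i i).im = 0 := ((Complex.le_def.mp h0).2).symm
  have hcast : (RCLike.ofReal (hX.eigenvalues i) : ℂ) = ((hX.eigenvalues i : ℝ) : ℂ) := rfl
  rw [hcast]
  have : (N i i * ((hX.eigenvalues i : ℝ) : ℂ)).re = (N i i).re * hX.eigenvalues i := by
    simp [Complex.mul_re, him]
  rw [this]
  rcases le_or_gt 0 (hX.eigenvalues i) with h | h
  · calc (N i i).re * hX.eigenvalues i ≤ 1 * hX.eigenvalues i := by nlinarith
    _ ≤ max (hX.eigenvalues i) 0 := by simp [h]
  · calc (N i i).re * hX.eigenvalues i ≤ 0 := by nlinarith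
    _ ≤ max (hX.eigenvalues i) 0 := le_max_right _ _

lemma exists_measurement_eq {n : Type*} [Fintype n] [DecidableEq n]
    {X : Matrix n n ℂ} (hX : X.IsHermitian) :
    ∃ M : Matrix n n ℂ, M.PosSemidef ∧ (1 - M).PosSemidef ∧
      (M * X).trace.re = posPartTrace X := by
  set U : Matrix n n ℂ := (hX.eigenvectorUnitary : Matrix n n ℂ)
  have hUU : U * star U = 1 := (Matrix.mem_unitaryGroup_iff).mp hX.eigenvectorUnitary.2
  have hUU' : star U * U = 1 := (Matrix.mem_unitaryGroup_iff').mp hX.eigenvectorUnitary.2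
  set f : n → ℂ := fun i => if 0 < hX.eigenvalues i then 1 else 0 with hf
  refine ⟨U * Matrix.diagonal f * (star U), ?_, ?_, ?_⟩
  · refine Matrix.PosSemidef.mul_mul_conjTranspose_same ?_ U
    refine Matrix.posSemidef_diagonal_iff.mpr fun i => ?_
    by_cases h : 0 < hX.eigenvalues i <;> simp [hf, h]
  · have e : 1 - U * Matrix.diagonal f * (star U) = U * Matrix.diagonal (fun i => 1 - f i) * (star U) := by
      have : Matrix.diagonal (fun i => 1 - f i) = 1 - Matrix.diagonal f := by
        rw [← Matrix.diagonal_one, ← Matrix.diagonal_sub]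
      rw [this, Matrix.mul_sub, Matrix.mul_one, Matrix.sub_mul,
        hUU]
    rw [e]
    refine Matrix.PosSemidef.mul_mul_conjTranspose_same ?_ U
    refine Matrix.posSemidef_diagonal_iff.mpr fun i => ?_
    by_cases h : 0 < hX.eigenvalues i <;> simp [hf, h]
  · have fold : (hX.eigenvectorUnitary : Matrix n n ℂ) = U := rfl
    conv_lhs => rw [hX.spectral_theorem, Unitary.conjStarAlgAut_apply]
    rw [fold]
    simp only [Matrix.mul_assoc]
    rw [← Matrix.mul_assoc (star U) U, hUU', Matrix.one_mul, Matrix.trace_mul_comm]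
    simp only [Matrix.mul_assoc]
    rw [hUU', Matrix.mul_one, Matrix.diagonal_mul_diagonal, Matrix.trace_diagonal,
      posPartTrace, dif_pos hX, Complex.re_sum]
    apply Finset.sum_congr rfl
    intro i _
    by_cases h : 0 < hX.eigenvalues i
    · have : max (hX.eigenvalues i) 0 = hX.eigenvalues i := max_eq_left h.le
      rw [this]
      simp [hf, h, Complex.ofReal_re, RCLike.ofReal]
    · have : max (hX.eigenvalues i) 0 = 0 := max_eq_right (not_lt.mp h)
      rw [this]
      simp [hf, h]

/-- Measurement-free characterization of differential privacy:
`Tr[M ρ'] ≤ e^ε Tr[M σ'] + δ` for all measurement operators `0 ≤ M ≤ 1` iff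
`E_{e^ε}(ρ'‖σ') ≤ δ`. -/
theorem dp_iff_hsDiv_le {d : ℕ} (ρ' σ' : Matrix (Fin d) (Fin d) ℂ)
    (hρ : IsDensity ρ') (hσ : IsDensity σ') (ε δ : ℝ) (hε : 0 ≤ ε) (hδ : 0 ≤ δ) :
    (∀ M : Matrix (Fin d) (Fin d) ℂ, M.PosSemidef → (1 - M).PosSemidef →
        (M * ρ').trace.re ≤ Real.exp ε * (M * σ').trace.re + δ) ↔
      hsDiv (Real.exp ε) ρ' σ' ≤ δ := by
  unfold hsDiv
  have hXh : (ρ' - (Real.exp ε : ℂ) • σ').IsHermitian := by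
    refine hρ.1.1.sub ?_
    unfold Matrix.IsHermitian
    rw [Matrix.conjTranspose_smul, hσ.1.1.eq]
    congr 1
    exact Complex.conj_ofReal _
  have key : ∀ M : Matrix (Fin d) (Fin d) ℂ,
      (M * (ρ' - (Real.exp ε : ℂ) • σ')).trace.re
        = (M * ρ').trace.re - Real.exp ε * (M * σ').trace.re := by
    intro M
    rw [Matrix.mul_sub, Matrix.trace_sub, Matrix.mul_smul, Matrix.trace_smul]
    simp [Complex.mul_re, -Complex.ofReal_exp]
  constructor
  · intro h
    obtain ⟨M, hM, hM1, hMeq⟩ := exists_measurement_eq hXh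
    have h2 := h M hM hM1
    rw [← hMeq, key M]
    linarith
  · intro h M hM hM1
    have h2 := trace_mul_re_le hXh M hM hM1
    rw [key M] at h2
    linarith
end

section
/- Measured relative entropy bound under pure differential privacy: let ε ≥ 0 and let ρ', σ' be density operators on a finite-dimensional complex Hilbert space such that Tr[M ρ'] ≤ e^ε·Tr[M σ'] and Tr[M σ'] ≤ e^ε·Tr[M ρ'] for every operator 0 ≤ M ≤ I. Then for every POVM {M_x}_{x∈X} (a finite family of operators M_x ≥ 0 with Σ_x M_x = I), writing p_x = Tr[M_x ρ'] and q_x = Tr[M_x σ'], the Kullback–Leibler divergence satisfies Σ_x p_x·log(p_x/q_x) ≤ 2ε·E₁(ρ'‖σ') ≤ 2ε·(1 − e^{−ε}). -/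
open scoped BigOperators ComplexOrder

namespace DPAux
open Matrix
open scoped ComplexOrder
variable {n : Type*} [Fintype n] [DecidableEq n]

lemma diag_re_nonneg {N : Matrix n n ℂ} (hN : N.PosSemidef) (i : n) : 0 ≤ (N i i).re := by
  have h := hN.re_dotProduct_nonneg (Pi.single i 1)
  simpa [dotProduct, mulVec, Pi.single_apply] using h

lemma trace_mul_eq_sum {X : Matrix n n ℂ} (hX : X.IsHermitian) (N : Matrix n n ℂ) :
    (N * X).trace = ∑ i, ((star (hX.eigenvectorUnitary : Matrix n n ℂ) * N *
      (hX.eigenvectorUnitary : Matrix n n ℂ)) i i) * (hX.eigenvalues i : ℂ) := by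
  set V : Matrix n n ℂ := (hX.eigenvectorUnitary : Matrix n n ℂ)
  conv_lhs => rw [hX.spectral_theorem, Unitary.conjStarAlgAut_apply]
  rw [show N * (V * diagonal (RCLike.ofReal ∘ hX.eigenvalues) * star V)
      = (N * V * diagonal (RCLike.ofReal ∘ hX.eigenvalues)) * star V by
        simp [mul_assoc],
    trace_mul_comm, show star V * (N * V * diagonal (RCLike.ofReal ∘ hX.eigenvalues))
      = (star V * N * V) * diagonal (RCLike.ofReal ∘ hX.eigenvalues) by simp [mul_assoc]]
  simp [Matrix.trace, Matrix.diag, Matrix.mul_diagonal]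

lemma star_unitary_mul_self (V : Matrix.unitaryGroup n ℂ) :
    star (V : Matrix n n ℂ) * (V : Matrix n n ℂ) = 1 := by
  exact_mod_cast Unitary.coe_star_mul_self V

lemma unitary_mul_star_self (V : Matrix.unitaryGroup n ℂ) :
    (V : Matrix n n ℂ) * star (V : Matrix n n ℂ) = 1 := by
  exact_mod_cast Unitary.coe_mul_star_self V

lemma one_sub_conj {N : Matrix n n ℂ} (hN1 : (1 - N).PosSemidef) (V : Matrix.unitaryGroup n ℂ) :
    (1 - star (V : Matrix n n ℂ) * N * (V : Matrix n n ℂ)).PosSemidef := by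
  have h : (1 : Matrix n n ℂ) - star (V:Matrix n n ℂ) * N * (V:Matrix n n ℂ)
      = star (V:Matrix n n ℂ) * (1 - N) * (V:Matrix n n ℂ) := by
    rw [Matrix.mul_sub, Matrix.sub_mul, mul_one, star_unitary_mul_self V]
  rw [h, Matrix.star_eq_conjTranspose (V:Matrix n n ℂ)]
  exact hN1.conjTranspose_mul_mul_same _

lemma trace_mul_re_le_posPartTrace {X N : Matrix n n ℂ} (hX : X.IsHermitian)
    (hN : N.PosSemidef) (hN1 : (1 - N).PosSemidef) :
    ((N * X).trace).re ≤ posPartTrace X := by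
  rw [trace_mul_eq_sum hX N, posPartTrace, dif_pos hX, Complex.re_sum]
  set V : Matrix n n ℂ := (hX.eigenvectorUnitary : Matrix n n ℂ) with hV
  apply Finset.sum_le_sum
  intro i _
  have hconj : (star V * N * V).PosSemidef := by
    rw [Matrix.star_eq_conjTranspose V]; exact hN.conjTranspose_mul_mul_same _
  have h1 : 0 ≤ ((star V * N * V) i i).re := diag_re_nonneg hconj i
  have h2 : ((star V * N * V) i i).re ≤ 1 := by
    have := diag_re_nonneg (one_sub_conj hN1 hX.eigenvectorUnitary) i
    simp only [Matrix.sub_apply, Matrix.one_apply_eq, Complex.sub_re, Complex.one_re] at this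
    linarith
  have hre : ((star V * N * V) i i * (hX.eigenvalues i : ℂ)).re
      = ((star V * N * V) i i).re * hX.eigenvalues i := by
    simp [Complex.mul_re]
  rw [hre]
  rcases le_or_gt 0 (hX.eigenvalues i) with h | h
  · calc ((star V * N * V) i i).re * hX.eigenvalues i ≤ 1 * hX.eigenvalues i := by nlinarith
    _ = hX.eigenvalues i := one_mul _
    _ ≤ max (hX.eigenvalues i) 0 := le_max_left _ _
  · have : ((star V * N * V) i i).re * hX.eigenvalues i ≤ 0 := by nlinarith
    calc _ ≤ (0:ℝ) := this
    _ ≤ max (hX.eigenvalues i) 0 := le_max_right _ _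

lemma trace_mul_re_nonneg {X N : Matrix n n ℂ} (hX : X.PosSemidef) (hN : N.PosSemidef) :
    0 ≤ ((N * X).trace).re := by
  rw [trace_mul_eq_sum hX.1 N, Complex.re_sum]
  set V : Matrix n n ℂ := (hX.1.eigenvectorUnitary : Matrix n n ℂ) with hV
  apply Finset.sum_nonneg
  intro i _
  have hconj : (star V * N * V).PosSemidef := by
    rw [Matrix.star_eq_conjTranspose V]; exact hN.conjTranspose_mul_mul_same _
  have h1 : 0 ≤ ((star V * N * V) i i).re := diag_re_nonneg hconj i
  have h2 : 0 ≤ hX.1.eigenvalues i := hX.eigenvalues_nonneg i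
  have hre : ((star V * N * V) i i * (hX.1.eigenvalues i : ℂ)).re
      = ((star V * N * V) i i).re * hX.1.eigenvalues i := by
    simp [Complex.mul_re]
  rw [hre]; positivity

lemma posPartTrace_of_posSemidef {X : Matrix n n ℂ} (hX : X.PosSemidef) :
    posPartTrace X = X.trace.re := by
  rw [posPartTrace, dif_pos hX.1]
  have h1 : X.trace = ∑ i, (hX.1.eigenvalues i : ℂ) := by
    have := trace_mul_eq_sum hX.1 1
    rw [one_mul] at this
    rw [this]
    congr 1; ext i
    rw [mul_one, star_unitary_mul_self hX.1.eigenvectorUnitary]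
    simp
  rw [h1, Complex.re_sum]
  apply Finset.sum_congr rfl
  intro i _
  simp [max_eq_left (hX.eigenvalues_nonneg i)]

lemma exists_projector {X : Matrix n n ℂ} (hX : X.IsHermitian) :
    ∃ P : Matrix n n ℂ, P.PosSemidef ∧ (1 - P).PosSemidef ∧
      ((P * X).trace).re = posPartTrace X := by
  set V : Matrix n n ℂ := (hX.eigenvectorUnitary : Matrix n n ℂ) with hV
  set c : n → ℂ := fun i => if 0 < hX.eigenvalues i then 1 else 0 with hc
  have hVsV : star V * V = 1 := star_unitary_mul_self hX.eigenvectorUnitary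
  have hVVs : V * star V = 1 := unitary_mul_star_self hX.eigenvectorUnitary
  refine ⟨V * Matrix.diagonal c * star V, ?_, ?_, ?_⟩
  · have hd : (Matrix.diagonal c).PosSemidef := by
      refine Matrix.PosSemidef.diagonal fun i => ?_
      dsimp [c]; split <;> simp
    have := hd.mul_mul_conjTranspose_same V
    rwa [← Matrix.star_eq_conjTranspose V] at this
  · have heq : (1 : Matrix n n ℂ) - V * Matrix.diagonal c * star V
        = V * Matrix.diagonal (fun i => 1 - c i) * star V := by
      have hdiag : Matrix.diagonal (fun i => 1 - c i) = 1 - Matrix.diagonal c := by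
        ext i j
        by_cases h : i = j <;> simp [Matrix.diagonal, h, Matrix.one_apply]
      rw [hdiag, Matrix.mul_sub, Matrix.sub_mul, mul_one, hVVs]
    rw [heq]
    have hd : (Matrix.diagonal fun i => 1 - c i).PosSemidef := by
      refine Matrix.PosSemidef.diagonal fun i => ?_
      dsimp [c]; split <;> simp
    have := hd.mul_mul_conjTranspose_same V
    rwa [← Matrix.star_eq_conjTranspose V] at this
  · rw [trace_mul_eq_sum hX, posPartTrace, dif_pos hX, Complex.re_sum]
    apply Finset.sum_congr rfl
    intro i _
    have hmid : star V * (V * Matrix.diagonal c * star V) * V = Matrix.diagonal c := by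
      rw [show star V * (V * Matrix.diagonal c * star V) * V
          = (star V * V) * Matrix.diagonal c * (star V * V) by simp only [mul_assoc],
        hVsV, one_mul, mul_one]
    rw [hmid]
    simp only [Matrix.diagonal_apply_eq]
    dsimp [c]
    split <;> rename_i h
    · simp [max_eq_left (le_of_lt h)]
    · push_neg at h
      simp [max_eq_right h]

lemma kl_term_bound {p q ε : ℝ} (hε : 0 ≤ ε) (hq : 0 ≤ q)
    (hpq : p ≤ Real.exp ε * q) (hqp : q ≤ Real.exp ε * p) :
    p * Real.log (p / q) ≤ ε * |p - q| + (p - q) := by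
  rcases eq_or_lt_of_le hq with hq0 | hq0
  · have hq' : q = 0 := hq0.symm
    have hp1 : p ≤ 0 := by rw [hq', mul_zero] at hpq; exact hpq
    have hp2 : 0 ≤ p := by nlinarith [Real.exp_pos ε, hqp]
    have hp0 : p = 0 := le_antisymm hp1 hp2
    simp [hp0, hq']
  · have hp0 : 0 < p := by
      by_contra h
      push_neg at h
      nlinarith [Real.exp_pos ε]
    have hlog1 : Real.log (p / q) ≤ ε := by
      rw [Real.log_div (ne_of_gt hp0) (ne_of_gt hq0)]
      have := Real.log_le_log hp0 hpq
      rw [Real.log_mul (ne_of_gt (Real.exp_pos ε)) (ne_of_gt hq0), Real.log_exp] at this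
      linarith
    have hlog2 : -ε ≤ Real.log (p / q) := by
      rw [Real.log_div (ne_of_gt hp0) (ne_of_gt hq0)]
      have := Real.log_le_log hq0 hqp
      rw [Real.log_mul (ne_of_gt (Real.exp_pos ε)) (ne_of_gt hp0), Real.log_exp] at this
      linarith
    have key1 : (p - q) * Real.log (p / q) ≤ ε * |p - q| := by
      rcases le_or_gt q p with h | h
      · have : Real.log (p/q) ≤ ε := hlog1
        calc (p - q) * Real.log (p / q) ≤ (p - q) * ε := by nlinarith
        _ = ε * |p - q| := by rw [abs_of_nonneg (by linarith)]; ring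
      · calc (p - q) * Real.log (p / q) = (q - p) * (- Real.log (p / q)) := by ring
        _ ≤ (q - p) * ε := by nlinarith
        _ = ε * |p - q| := by rw [abs_of_neg (by linarith)]; ring
    have key2 : q * Real.log (p / q) ≤ p - q := by
      have hx : 0 < p / q := div_pos hp0 hq0
      have := Real.log_le_sub_one_of_pos hx
      calc q * Real.log (p / q) ≤ q * (p / q - 1) := by nlinarith
      _ = p - q := by field_simp
    have : p * Real.log (p / q) = (p - q) * Real.log (p / q) + q * Real.log (p / q) := by ring
    linarith

lemma psd_sum {ι : Type*} (s : Finset ι) (f : ι → Matrix n n ℂ)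
    (h : ∀ i ∈ s, (f i).PosSemidef) : (∑ i ∈ s, f i).PosSemidef := by
  classical
  induction s using Finset.induction_on with
  | empty => simpa using Matrix.PosSemidef.zero
  | insert _ _ hx ih =>
    rw [Finset.sum_insert hx]
    exact (h _ (Finset.mem_insert_self _ _)).add
      (ih fun i hi => h i (Finset.mem_insert_of_mem hi))

end DPAux
open DPAux


/-- Measured relative entropy bound under pure `ε`-differential privacy: the
Kullback–Leibler divergence of the measurement outcome distributions of any POVM is at
most `2ε E₁(ρ'‖σ') ≤ 2ε(1 - e^{-ε})`. -/
theorem measured_KL_bound_of_pure_dp {d m : ℕ} (ε : ℝ) (hε : 0 ≤ ε)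
    (ρ' σ' : Matrix (Fin d) (Fin d) ℂ) (hρ : IsDensity ρ') (hσ : IsDensity σ')
    (hDP₁ : ∀ M : Matrix (Fin d) (Fin d) ℂ, M.PosSemidef → (1 - M).PosSemidef →
        (M * ρ').trace.re ≤ Real.exp ε * (M * σ').trace.re)
    (hDP₂ : ∀ M : Matrix (Fin d) (Fin d) ℂ, M.PosSemidef → (1 - M).PosSemidef →
        (M * σ').trace.re ≤ Real.exp ε * (M * ρ').trace.re)
    (M : Fin m → Matrix (Fin d) (Fin d) ℂ) (hM : ∀ x, (M x).PosSemidef)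
    (hMsum : ∑ x, M x = 1) :
    (∑ x, (M x * ρ').trace.re *
        Real.log ((M x * ρ').trace.re / (M x * σ').trace.re)) ≤
      2 * ε * hsDiv 1 ρ' σ' ∧
    2 * ε * hsDiv 1 ρ' σ' ≤ 2 * ε * (1 - Real.exp (-ε)) := by
  have hΔ : (ρ' - σ').IsHermitian := hρ.1.1.sub hσ.1.1
  have hTd : hsDiv 1 ρ' σ' = posPartTrace (ρ' - σ') := by simp [hsDiv]
  set p : Fin m → ℝ := fun x => ((M x * ρ').trace).re with hpdef
  set q : Fin m → ℝ := fun x => ((M x * σ').trace).re with hqdef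
  have hMle : ∀ x, ((1:Matrix (Fin d) (Fin d) ℂ) - M x).PosSemidef := by
    intro x
    have hsplit := Finset.sum_sdiff (Finset.subset_univ {x}) (f := M)
    have h1 : (1:Matrix (Fin d) (Fin d) ℂ) - M x = ∑ y ∈ Finset.univ \ {x}, M y := by
      rw [← hMsum, ← hsplit]; simp
    rw [h1]
    exact psd_sum _ _ fun y _ => hM y
  have hpnn : ∀ x, 0 ≤ p x := fun x => trace_mul_re_nonneg hρ.1 (hM x)
  have hqnn : ∀ x, 0 ≤ q x := fun x => trace_mul_re_nonneg hσ.1 (hM x)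
  have hpq : ∀ x, p x ≤ Real.exp ε * q x := fun x => hDP₁ (M x) (hM x) (hMle x)
  have hqp : ∀ x, q x ≤ Real.exp ε * p x := fun x => hDP₂ (M x) (hM x) (hMle x)
  have hsum_p : ∑ x, p x = 1 := by
    have h1 : ∑ x, (M x * ρ').trace = ((∑ x, M x) * ρ').trace := by
      rw [Finset.sum_mul, Matrix.trace_sum]
    have : ∑ x, p x = (((∑ x, M x) * ρ').trace).re := by
      rw [← h1, Complex.re_sum]
    rw [this, hMsum, one_mul, hρ.2, Complex.one_re]
  have hsum_q : ∑ x, q x = 1 := by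
    have h1 : ∑ x, (M x * σ').trace = ((∑ x, M x) * σ').trace := by
      rw [Finset.sum_mul, Matrix.trace_sum]
    have : ∑ x, q x = (((∑ x, M x) * σ').trace).re := by
      rw [← h1, Complex.re_sum]
    rw [this, hMsum, one_mul, hσ.2, Complex.one_re]
  have sum_pq : ∑ x, (p x - q x) = 0 := by
    rw [Finset.sum_sub_distrib, hsum_p, hsum_q]; ring
  have step1 : (∑ x, p x * Real.log (p x / q x)) ≤ ε * ∑ x, |p x - q x| := by
    calc ∑ x, p x * Real.log (p x / q x)
        ≤ ∑ x, (ε * |p x - q x| + (p x - q x)) :=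
          Finset.sum_le_sum fun x _ => kl_term_bound hε (hqnn x) (hpq x) (hqp x)
      _ = ε * ∑ x, |p x - q x| + ∑ x, (p x - q x) := by
          rw [Finset.sum_add_distrib, Finset.mul_sum]
      _ = ε * ∑ x, |p x - q x| := by rw [sum_pq]; ring
  have habs : ∑ x, |p x - q x| = 2 * ∑ x, max (p x - q x) 0 := by
    have hterm : ∀ x : Fin m, |p x - q x| = 2 * max (p x - q x) 0 - (p x - q x) := by
      intro x
      rcases le_total (p x - q x) 0 with h | h
      · rw [abs_of_nonpos h, max_eq_right h]; ring
      · rw [abs_of_nonneg h, max_eq_left h]; ring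
    rw [Finset.sum_congr rfl fun x _ => hterm x, Finset.sum_sub_distrib, sum_pq,
      ← Finset.mul_sum]
    ring
  have hposle : ∑ x, max (p x - q x) 0 ≤ posPartTrace (ρ' - σ') := by
    set S := Finset.univ.filter (fun x => 0 < p x - q x) with hS
    set N := ∑ x ∈ S, M x with hNdef
    have hNpsd : N.PosSemidef := psd_sum _ _ fun x _ => hM x
    have hsplit := Finset.sum_sdiff (Finset.subset_univ S) (f := M)
    have hcompl : (1:Matrix (Fin d) (Fin d) ℂ) - N = ∑ x ∈ Finset.univ \ S, M x := by
      rw [← hMsum, ← hsplit]; abel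
    have hN1 : ((1:Matrix (Fin d) (Fin d) ℂ) - N).PosSemidef := by
      rw [hcompl]; exact psd_sum _ _ fun x _ => hM x
    have htr : ((N * (ρ' - σ')).trace).re = ∑ x ∈ S, (p x - q x) := by
      rw [hNdef, Finset.sum_mul, Matrix.trace_sum, Complex.re_sum]
      apply Finset.sum_congr rfl
      intro x _
      rw [Matrix.mul_sub, Matrix.trace_sub, Complex.sub_re]
    have hmax : ∑ x, max (p x - q x) 0 = ∑ x ∈ S, (p x - q x) := by
      rw [hS, Finset.sum_filter]
      apply Finset.sum_congr rfl
      intro x _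
      rcases lt_or_ge 0 (p x - q x) with h | h
      · rw [if_pos h, max_eq_left h.le]
      · rw [if_neg (not_lt.mpr h), max_eq_right h]
    rw [hmax, ← htr]
    exact trace_mul_re_le_posPartTrace hΔ hNpsd hN1
  constructor
  · show (∑ x, p x * Real.log (p x / q x)) ≤ 2 * ε * hsDiv 1 ρ' σ'
    calc (∑ x, p x * Real.log (p x / q x)) ≤ ε * ∑ x, |p x - q x| := step1
      _ = 2 * ε * ∑ x, max (p x - q x) 0 := by rw [habs]; ring
      _ ≤ 2 * ε * posPartTrace (ρ' - σ') := by
          have h2ε : 0 ≤ 2 * ε := by linarith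
          exact mul_le_mul_of_nonneg_left hposle h2ε
      _ = 2 * ε * hsDiv 1 ρ' σ' := by rw [hTd]
  · obtain ⟨P, hP, hP1, hPtr⟩ := exists_projector hΔ
    set a : ℝ := ((P * ρ').trace).re with hadef
    set b : ℝ := ((P * σ').trace).re with hbdef
    have hab : posPartTrace (ρ' - σ') = a - b := by
      rw [← hPtr, Matrix.mul_sub, Matrix.trace_sub, Complex.sub_re]
    have ha1 : a ≤ 1 := by
      have := trace_mul_re_le_posPartTrace hρ.1.1 hP hP1
      rw [posPartTrace_of_posSemidef hρ.1, hρ.2, Complex.one_re] at this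
      exact this
    have hb0 : 0 ≤ b := trace_mul_re_nonneg hσ.1 hP
    have hDP : a ≤ Real.exp ε * b := hDP₁ P hP hP1
    have hkey : posPartTrace (ρ' - σ') ≤ 1 - Real.exp (-ε) := by
      rw [hab]
      have hexp : Real.exp (-ε) * Real.exp ε = 1 := by
        rw [← Real.exp_add]; simp
      have h1 : Real.exp (-ε) * a ≤ b := by
        calc Real.exp (-ε) * a ≤ Real.exp (-ε) * (Real.exp ε * b) :=
          mul_le_mul_of_nonneg_left hDP (Real.exp_nonneg _)
        _ = b := by rw [← mul_assoc, hexp, one_mul]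
      have hexple : Real.exp (-ε) ≤ 1 := Real.exp_le_one_iff.mpr (by linarith)
      have ha0 : 0 ≤ a := trace_mul_re_nonneg hρ.1 hP
      nlinarith
    rw [hTd]
    have h2ε : 0 ≤ 2 * ε := by linarith
    exact mul_le_mul_of_nonneg_left hkey h2ε
end

section
/- Hockey-stick divergence under global depolarizing noise: let D_p be the depolarizing channel on a D-dimensional system with parameter 0 ≤ p ≤ 1, D_p(ρ) = (1−p)ρ + p·Tr(ρ)·I/D. Then for all density operators ρ, σ and γ ≥ 1, E_γ(D_p(ρ)‖D_p(σ)) ≤ max{0, (1−γ)·p/D + (1−p)·E_γ(ρ‖σ)}. Moreover, if D ≥ 2, the contraction coefficient satisfies η_γ(D_p) = max{0, (1−γ)·p/D + (1−p)}. -/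
open scoped BigOperators ComplexOrder

/-- The depolarizing channel `D_p(ρ) = (1-p)ρ + p Tr(ρ) I/D` on a `D`-dimensional system. -/
noncomputable def depol (D : ℕ) (p : ℝ) :
    Matrix (Fin D) (Fin D) ℂ →ₗ[ℂ] Matrix (Fin D) (Fin D) ℂ where
  toFun ρ := (1 - (p : ℂ)) • ρ + (((p : ℂ) / D) * ρ.trace) • (1 : Matrix (Fin D) (Fin D) ℂ)
  map_add' X Y := by
    simp [Matrix.trace_add, mul_add, add_smul]
    abel
  map_smul' c X := by
    simp [Matrix.trace_smul, smul_smul, smul_add]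
    ring_nf

open Polynomial Matrix

section AuxLemmas
set_option linter.unusedSectionVars false
variable {n : Type*} [Fintype n] [DecidableEq n]

theorem myCharpoly_diag (d : n → ℂ) :
    (Matrix.diagonal d).charpoly = ∏ i, (X - C (d i)) := by
  have h : charmatrix (Matrix.diagonal d) = Matrix.diagonal (fun i => (X : ℂ[X]) - C (d i)) := by
    ext i j
    by_cases hij : i = j
    · subst hij; simp
    · simp [charmatrix_apply_ne _ _ _ hij, Matrix.diagonal_apply_ne _ hij]
  rw [Matrix.charpoly, h, Matrix.det_diagonal]

theorem myCharpoly_conj (U A : Matrix n n ℂ)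
    (h1 : U * star U = 1) : (U * A * star U).charpoly = A.charpoly := by
  let f : Matrix n n ℂ →+* Matrix n n ℂ[X] := (C : ℂ →+* ℂ[X]).mapMatrix
  have hs : ∀ B : Matrix n n ℂ[X], Matrix.scalar n (X : ℂ[X]) * B = B * Matrix.scalar n X :=
    fun B => (Matrix.scalar_commute (X : ℂ[X]) (fun r => Commute.all _ r) B).eq
  have hfU : f U * f (star U) = 1 := by
    rw [← _root_.map_mul f, h1, _root_.map_one f]
  have key : charmatrix (U * A * star U) = f U * charmatrix A * f (star U) := by
    show Matrix.scalar n (X : ℂ[X]) - f (U * A * star U) = f U * (Matrix.scalar n X - f A) * f (star U)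
    rw [_root_.map_mul f, _root_.map_mul f, Matrix.mul_sub, Matrix.sub_mul]
    congr 1
    rw [mul_assoc, hs (f (star U)), ← mul_assoc, hfU, one_mul]
  rw [Matrix.charpoly, Matrix.charpoly, key, Matrix.det_mul, Matrix.det_mul]
  calc (f U).det * (charmatrix A).det * (f (star U)).det
      = (charmatrix A).det * ((f U * f (star U)).det) := by rw [Matrix.det_mul]; ring
    _ = (charmatrix A).det := by rw [hfU, Matrix.det_one, mul_one]

theorem rep_isHermitian {A U : Matrix n n ℂ} {d : n → ℝ}
    (hrep : A = U * Matrix.diagonal (fun i => (d i : ℂ)) * star U) : A.IsHermitian := by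
  rw [hrep]
  have hd : (Matrix.diagonal (fun i => (d i : ℂ))).IsHermitian := by
    have hst : (star fun i => ((d i : ℂ))) = fun i => ((d i : ℂ)) := by
      funext i; exact Complex.conj_ofReal _
    rw [Matrix.IsHermitian, Matrix.diagonal_conjTranspose, hst]
  rw [Matrix.IsHermitian, Matrix.star_eq_conjTranspose, Matrix.conjTranspose_mul,
    Matrix.conjTranspose_mul, Matrix.conjTranspose_conjTranspose, hd.eq, Matrix.mul_assoc]

theorem rep_sum_eig {A U : Matrix n n ℂ} {d : n → ℝ}
    (h1 : U * star U = 1)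
    (hrep : A = U * Matrix.diagonal (fun i => (d i : ℂ)) * star U)
    (hA : A.IsHermitian) (g : ℝ → ℝ) :
    ∑ i, g (hA.eigenvalues i) = ∑ i, g (d i) := by
  have c1 : A.charpoly = ∏ i, (X - C (d i : ℂ)) := by
    rw [hrep, myCharpoly_conj _ _ h1, myCharpoly_diag]
  have c2 : A.charpoly = ∏ i, (X - C (hA.eigenvalues i : ℂ)) := by
    conv_lhs => rw [hA.spectral_theorem]
    rw [Unitary.conjStarAlgAut_apply, myCharpoly_conj _ _ (Matrix.mem_unitaryGroup_iff.mp hA.eigenvectorUnitary.2),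
      myCharpoly_diag]
    rfl
  have r : ∀ e : n → ℂ, (∏ i, (X - C (e i))).roots = Multiset.map e Finset.univ.val := by
    intro e
    have h : (∏ i, (X - C (e i)))
        = (Multiset.map (fun a => X - C a) (Multiset.map e Finset.univ.val)).prod := by
      rw [Multiset.map_map]; rfl
    rw [h, roots_multiset_prod_X_sub_C]
  have hroots : Multiset.map (fun i => (hA.eigenvalues i : ℂ)) Finset.univ.val
      = Multiset.map (fun i => (d i : ℂ)) Finset.univ.val := by
    rw [← r, ← r, ← c1, ← c2]
  have hmul : Multiset.map hA.eigenvalues Finset.univ.val = Multiset.map d Finset.univ.val := by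
    apply Multiset.map_injective (f := (Complex.ofReal)) Complex.ofReal_injective
    simpa [Multiset.map_map] using hroots
  have e1 : ∑ i, g (hA.eigenvalues i)
      = ((Multiset.map hA.eigenvalues Finset.univ.val).map g).sum := by
    rw [Multiset.map_map]; rfl
  have e2 : ∑ i, g (d i) = ((Multiset.map d Finset.univ.val).map g).sum := by
    rw [Multiset.map_map]; rfl
  rw [e1, e2, hmul]

theorem diag_comb (a c : ℝ) (d : n → ℝ) :
    (a : ℂ) • Matrix.diagonal (fun i => (d i : ℂ)) + (c : ℂ) • 1 =
      Matrix.diagonal (fun i => ((a * d i + c : ℝ) : ℂ)) := by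
  ext i j
  by_cases h : i = j
  · subst h
    push_cast
    simp [Matrix.one_apply]
  · simp [Matrix.diagonal_apply_ne _ h, Matrix.one_apply_ne h]

theorem rep_affine {X : Matrix n n ℂ} (hX : X.IsHermitian) (a c : ℝ) :
    (a : ℂ) • X + (c : ℂ) • 1 =
      (hX.eigenvectorUnitary : Matrix n n ℂ) *
        Matrix.diagonal (fun i => ((a * hX.eigenvalues i + c : ℝ) : ℂ)) *
        star (hX.eigenvectorUnitary : Matrix n n ℂ) := by
  have h1 : (hX.eigenvectorUnitary : Matrix n n ℂ) * star (hX.eigenvectorUnitary : Matrix n n ℂ)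
      = 1 := Matrix.mem_unitaryGroup_iff.mp hX.eigenvectorUnitary.2
  have hsp : X = (hX.eigenvectorUnitary : Matrix n n ℂ) *
      Matrix.diagonal (fun i => (hX.eigenvalues i : ℂ)) *
      star (hX.eigenvectorUnitary : Matrix n n ℂ) := hX.spectral_theorem
  rw [← diag_comb, Matrix.mul_add, Matrix.add_mul]
  congr 1
  · rw [Matrix.mul_smul, Matrix.smul_mul, ← hsp]
  · rw [Matrix.mul_smul, Matrix.smul_mul, Matrix.mul_one, h1]

theorem posPartTrace_nonneg (A : Matrix n n ℂ) : 0 ≤ posPartTrace A := by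
  rw [posPartTrace]
  split_ifs with h
  · exact Finset.sum_nonneg fun i _ => le_max_right _ _
  · exact le_refl 0

theorem posPartTrace_rep {A U : Matrix n n ℂ} {d : n → ℝ}
    (h1 : U * star U = 1)
    (hrep : A = U * Matrix.diagonal (fun i => (d i : ℂ)) * star U) :
    posPartTrace A = ∑ i, max (d i) 0 := by
  have hA := rep_isHermitian hrep
  rw [posPartTrace, dif_pos hA]
  exact rep_sum_eig h1 hrep hA (fun t => max t 0)

theorem posPartTrace_diag (d : n → ℝ) :
    posPartTrace (Matrix.diagonal (fun i => (d i : ℂ))) = ∑ i, max (d i) 0 := by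
  refine posPartTrace_rep (U := 1) (by rw [star_one, Matrix.mul_one]) ?_
  rw [star_one, Matrix.one_mul, Matrix.mul_one]

theorem real_key (x : n → ℝ) (a c : ℝ) (ha : 0 ≤ a) (hc : c ≤ 0) :
    ∑ i, max (a * x i + c) 0 ≤ max 0 (c + a * ∑ i, max (x i) 0) := by
  by_cases hex : ∃ j, 0 < a * x j + c
  · obtain ⟨j, hj⟩ := hex
    have key : ∑ i, max (a * x i + c) 0 ≤ c + a * ∑ i, max (x i) 0 := by
      rw [Finset.mul_sum, ← Finset.sum_erase_add _ _ (Finset.mem_univ j),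
        ← Finset.sum_erase_add _ (fun i => a * max (x i) 0) (Finset.mem_univ j)]
      have h1 : ∑ i ∈ Finset.univ.erase j, max (a * x i + c) 0
          ≤ ∑ i ∈ Finset.univ.erase j, a * max (x i) 0 := by
        refine Finset.sum_le_sum fun i _ => ?_
        refine max_le ?_ ?_
        · calc a * x i + c ≤ a * x i := by linarith
            _ ≤ a * max (x i) 0 := mul_le_mul_of_nonneg_left (le_max_left _ _) ha
        · positivity
      have h2 : max (a * x j + c) 0 ≤ a * max (x j) 0 + c := by
        rw [max_eq_left hj.le]
        have : a * x j ≤ a * max (x j) 0 := mul_le_mul_of_nonneg_left (le_max_left _ _) ha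
        linarith
      linarith
    exact key.trans (le_max_right _ _)
  · push_neg at hex
    have h : ∑ i, max (a * x i + c) 0 = 0 :=
      Finset.sum_eq_zero fun i _ => max_eq_right (hex i)
    rw [h]
    exact le_max_left _ _

theorem herm_sub {ρ σ : Matrix n n ℂ} (γ : ℝ) (hρ : ρ.IsHermitian) (hσ : σ.IsHermitian) :
    (ρ - (γ : ℂ) • σ).IsHermitian := by
  rw [Matrix.IsHermitian, Matrix.conjTranspose_sub, Matrix.conjTranspose_smul, hρ.eq, hσ.eq,
    Complex.star_def, Complex.conj_ofReal]

theorem trace_re_nonneg {A : Matrix n n ℂ} (hA : A.PosSemidef) : 0 ≤ A.trace.re := by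
  rw [Matrix.trace, Complex.re_sum]
  refine Finset.sum_nonneg fun i _ => ?_
  have h := hA.re_dotProduct_nonneg (Pi.single i 1)
  have hd : dotProduct (star (Pi.single i 1)) (A *ᵥ Pi.single i 1) = A i i := by
    simp [dotProduct, Matrix.mulVec, Pi.single_apply, Finset.sum_ite_eq,
      mul_comm, Finset.sum_ite_eq']
  rw [hd] at h
  simpa using h

theorem trace_mul_re_nonneg {A B : Matrix n n ℂ} (hA : A.PosSemidef) (hB : B.PosSemidef) :
    0 ≤ (A * B).trace.re := by
  obtain ⟨Cm, hC⟩ : ∃ Cm : Matrix n n ℂ, B = Cmᴴ * Cm := by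
    open scoped MatrixOrder Matrix.Norms.L2Operator in
    exact CStarAlgebra.nonneg_iff_eq_star_mul_self.mp hB.nonneg
  have h : (A * B).trace = (Cm * A * Cmᴴ).trace := by
    rw [hC, ← Matrix.mul_assoc, Matrix.trace_mul_cycle]
  rw [h]
  exact trace_re_nonneg (hA.mul_mul_conjTranspose_same Cm)

theorem hsDiv_le_one {ρ σ : Matrix n n ℂ} (γ : ℝ) (hγ : 1 ≤ γ)
    (hρ : IsDensity ρ) (hσ : IsDensity σ) : hsDiv γ ρ σ ≤ 1 := by
  set X := ρ - (γ : ℂ) • σ with hXdef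
  have hX : X.IsHermitian := herm_sub γ hρ.1.1 hσ.1.1
  set U : Matrix n n ℂ := (hX.eigenvectorUnitary : Matrix n n ℂ) with hU
  have h1 : U * star U = 1 := Matrix.mem_unitaryGroup_iff.mp hX.eigenvectorUnitary.2
  have h2 : star U * U = 1 := Matrix.mem_unitaryGroup_iff'.mp hX.eigenvectorUnitary.2
  set lam := hX.eigenvalues with hlam
  have hsp : X = U * Matrix.diagonal (fun i => (lam i : ℂ)) * star U := hX.spectral_theorem
  set q : n → ℂ := fun i => if 0 < lam i then 1 else 0 with hq
  set P : Matrix n n ℂ := U * Matrix.diagonal q * star U with hP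
  have hE : hsDiv γ ρ σ = ∑ i, max (lam i) 0 := by
    rw [hsDiv, posPartTrace, dif_pos hX]
  have hPX : P * X = U * (Matrix.diagonal q * Matrix.diagonal (fun i => (lam i : ℂ))) * star U := by
    rw [hsp, hP]
    simp only [Matrix.mul_assoc]
    rw [← Matrix.mul_assoc (star U) U (Matrix.diagonal (fun i => (lam i : ℂ)) * star U), h2,
      Matrix.one_mul]
  have htr : (P * X).trace.re = ∑ i, max (lam i) 0 := by
    rw [hPX, Matrix.trace_mul_cycle, ← Matrix.mul_assoc, h2, Matrix.one_mul,
      Matrix.diagonal_mul_diagonal, Matrix.trace_diagonal, Complex.re_sum]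
    refine Finset.sum_congr rfl fun i _ => ?_
    by_cases h : 0 < lam i
    · simp [hq, h, max_eq_left h.le]
    · push_neg at h
      simp [hq, not_lt.mpr h, max_eq_right h]
  have hQpsd : (Matrix.diagonal q).PosSemidef := by
    refine Matrix.posSemidef_diagonal_iff.mpr fun i => ?_
    by_cases h : 0 < lam i <;> simp [hq, h]
  have hPpsd : P.PosSemidef := by
    have h := hQpsd.mul_mul_conjTranspose_same U
    rwa [← Matrix.star_eq_conjTranspose] at h
  have h1mP : (1 - P).PosSemidef := by
    have hqd : Matrix.diagonal (fun i => 1 - q i) = 1 - Matrix.diagonal q := by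
      rw [← Matrix.diagonal_one, Matrix.diagonal_sub]
    have hpsd : (Matrix.diagonal (fun i => 1 - q i)).PosSemidef := by
      refine Matrix.posSemidef_diagonal_iff.mpr fun i => ?_
      by_cases h : 0 < lam i <;> simp [hq, h]
    have h3 : U * Matrix.diagonal (fun i => 1 - q i) * star U = 1 - P := by
      rw [hqd, Matrix.mul_sub, Matrix.mul_one, Matrix.sub_mul, h1, hP]
    have h := hpsd.mul_mul_conjTranspose_same U
    rwa [← Matrix.star_eq_conjTranspose, h3] at h
  have hdec : (P * X).trace.re = (P * ρ).trace.re - γ * (P * σ).trace.re := by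
    rw [hXdef, Matrix.mul_sub, Matrix.mul_smul, Matrix.trace_sub, Matrix.trace_smul]
    simp [Complex.sub_re, smul_eq_mul, Complex.re_ofReal_mul]
  have hσ0 : 0 ≤ (P * σ).trace.re := trace_mul_re_nonneg hPpsd hσ.1
  have hρ1 : (P * ρ).trace.re ≤ 1 := by
    have h0 : 0 ≤ ((1 - P) * ρ).trace.re := trace_mul_re_nonneg h1mP hρ.1
    rw [Matrix.sub_mul, Matrix.one_mul, Matrix.trace_sub, Complex.sub_re, hρ.2] at h0
    simpa using h0
  have hγ0 : (0 : ℝ) ≤ γ := le_trans zero_le_one hγ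
  rw [hE, ← htr, hdec]
  nlinarith [mul_nonneg hγ0 hσ0]

end AuxLemmas

section DepolLemmas

theorem depol_diff (D : ℕ) (p γ : ℝ) {ρ σ : Matrix (Fin D) (Fin D) ℂ}
    (hρ : ρ.trace = 1) (hσ : σ.trace = 1) :
    depol D p ρ - (γ : ℂ) • depol D p σ =
      ((1 - p : ℝ) : ℂ) • (ρ - (γ : ℂ) • σ) + ((p / D * (1 - γ) : ℝ) : ℂ) • 1 := by
  show ((1 - (p : ℂ)) • ρ + (((p : ℂ) / D) * ρ.trace) • 1) -
      (γ : ℂ) • ((1 - (p : ℂ)) • σ + (((p : ℂ) / D) * σ.trace) • 1) = _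
  rw [hρ, hσ]
  push_cast
  module

theorem hsDiv_depol_le (D : ℕ) (p γ : ℝ) (hp0 : 0 ≤ p) (hp1 : p ≤ 1) (hγ : 1 ≤ γ)
    (ρ σ : Matrix (Fin D) (Fin D) ℂ) (hρ : IsDensity ρ) (hσ : IsDensity σ) :
    hsDiv γ (depol D p ρ) (depol D p σ) ≤
      max 0 ((1 - γ) * p / D + (1 - p) * hsDiv γ ρ σ) := by
  have hX : (ρ - (γ : ℂ) • σ).IsHermitian := herm_sub γ hρ.1.1 hσ.1.1
  set a : ℝ := 1 - p with ha
  set c : ℝ := p / D * (1 - γ) with hc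
  have ha0 : 0 ≤ a := by simp [ha]; linarith
  have hc0 : c ≤ 0 := by
    apply mul_nonpos_of_nonneg_of_nonpos
    · positivity
    · linarith
  have h1 : (hX.eigenvectorUnitary : Matrix (Fin D) (Fin D) ℂ) *
      star (hX.eigenvectorUnitary : Matrix (Fin D) (Fin D) ℂ) = 1 :=
    Matrix.mem_unitaryGroup_iff.mp hX.eigenvectorUnitary.2
  have hdiff : depol D p ρ - (γ : ℂ) • depol D p σ
      = (a : ℂ) • (ρ - (γ : ℂ) • σ) + (c : ℂ) • 1 := depol_diff D p γ hρ.2 hσ.2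
  have hL : hsDiv γ (depol D p ρ) (depol D p σ) = ∑ i, max (a * hX.eigenvalues i + c) 0 := by
    rw [hsDiv, hdiff]
    exact posPartTrace_rep h1 (rep_affine hX a c)
  have hR : hsDiv γ ρ σ = ∑ i, max (hX.eigenvalues i) 0 := by
    rw [hsDiv, posPartTrace, dif_pos hX]
  rw [hL, hR]
  have key := real_key hX.eigenvalues a c ha0 hc0
  have heq : c + a * ∑ i, max (hX.eigenvalues i) 0
      = (1 - γ) * p / D + (1 - p) * ∑ i, max (hX.eigenvalues i) 0 := by
    rw [hc, ha]; ring
  rw [heq] at key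
  exact key

end DepolLemmas

/-- Hockey-stick divergence under global depolarizing noise, and the exact value of the
contraction coefficient of the depolarizing channel. -/
theorem hsDiv_depol (D : ℕ) (p γ : ℝ) (hp0 : 0 ≤ p) (hp1 : p ≤ 1) (hγ : 1 ≤ γ) :
    (∀ ρ σ : Matrix (Fin D) (Fin D) ℂ, IsDensity ρ → IsDensity σ →
      hsDiv γ (depol D p ρ) (depol D p σ) ≤
        max 0 ((1 - γ) * p / D + (1 - p) * hsDiv γ ρ σ)) ∧
    (2 ≤ D → contractionCoeff γ (depol D p) = max 0 ((1 - γ) * p / D + (1 - p))) := by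
  refine ⟨fun ρ σ hρ hσ => hsDiv_depol_le D p γ hp0 hp1 hγ ρ σ hρ hσ, fun hD => ?_⟩
  haveI : NeZero D := ⟨by omega⟩
  have h01 : (0 : Fin D) ≠ 1 := by
    intro h
    have h' := congrArg Fin.val h
    rw [Fin.val_zero, Fin.val_one' D, Nat.mod_eq_of_lt (by omega : 1 < D)] at h'
    omega
  have hγ0 : (0 : ℝ) < γ := lt_of_lt_of_le one_pos hγ
  set a : ℝ := 1 - p with ha
  set c : ℝ := p / D * (1 - γ) with hc
  have ha0 : 0 ≤ a := by rw [ha]; linarith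
  have hc0 : c ≤ 0 := by
    rw [hc]
    apply mul_nonpos_of_nonneg_of_nonpos
    · positivity
    · linarith
  set dρ : Fin D → ℝ := fun i => if i = 0 then 1 else 0 with hdρ
  set dσ : Fin D → ℝ := fun i => if i = 1 then 1 else 0 with hdσ
  set ρ₀ : Matrix (Fin D) (Fin D) ℂ := Matrix.diagonal (fun i => ((dρ i : ℝ) : ℂ)) with hρ₀
  set σ₀ : Matrix (Fin D) (Fin D) ℂ := Matrix.diagonal (fun i => ((dσ i : ℝ) : ℂ)) with hσ₀
  have hρd : IsDensity ρ₀ := by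
    constructor
    · refine Matrix.posSemidef_diagonal_iff.mpr fun i => ?_
      by_cases h : i = 0 <;> simp [hdρ, h]
    · rw [hρ₀, Matrix.trace_diagonal]
      simp [hdρ, apply_ite (fun x : ℝ => (x : ℂ))]
  have hσd : IsDensity σ₀ := by
    constructor
    · refine Matrix.posSemidef_diagonal_iff.mpr fun i => ?_
      by_cases h : i = 1 <;> simp [hdσ, h]
    · rw [hσ₀, Matrix.trace_diagonal]
      simp [hdσ, apply_ite (fun x : ℝ => (x : ℂ))]
  set d : Fin D → ℝ := fun i => if i = 0 then 1 else if i = 1 then -γ else 0 with hd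
  have hX0 : ρ₀ - (γ : ℂ) • σ₀ = Matrix.diagonal (fun i => (d i : ℂ)) := by
    rw [hρ₀, hσ₀]
    ext i j
    by_cases h : i = j
    · subst h
      by_cases h0 : i = 0
      · subst h0
        simp [hdρ, hdσ, hd, h01]
      · by_cases h1 : i = 1
        · subst h1
          simp [hdρ, hdσ, hd, h01.symm, Ne.symm h0]
        · simp [hdρ, hdσ, hd, h0, h1]
    · simp [Matrix.diagonal_apply_ne _ h]
  have E0 : hsDiv γ ρ₀ σ₀ = 1 := by
    rw [hsDiv, hX0, posPartTrace_diag]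
    rw [Finset.sum_eq_single (0 : Fin D)]
    · simp [hd]
    · intro b _ hb
      have hb0 : d b ≤ 0 := by
        rw [hd]
        simp only [hb, if_false]
        split_ifs <;> linarith
      exact max_eq_right hb0
    · intro h; exact absurd (Finset.mem_univ _) h
  have Eimg : hsDiv γ ((depol D p) ρ₀) ((depol D p) σ₀) = max 0 ((1 - γ) * p / D + (1 - p)) := by
    rw [hsDiv, depol_diff D p γ hρd.2 hσd.2, hX0, ← ha, ← hc, diag_comb, posPartTrace_diag]
    rw [Finset.sum_eq_single (0 : Fin D)]
    · have hval : a * d 0 + c = (1 - γ) * p / D + (1 - p) := by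
        rw [hd]; simp; rw [ha, hc]; ring
      rw [hval, max_comm]
    · intro b _ hb
      have hb0 : a * d b + c ≤ 0 := by
        rw [hd]
        simp only [hb, if_false]
        split_ifs with h1
        · nlinarith
        · simp [hc0]
      exact max_eq_right hb0
    · intro h; exact absurd (Finset.mem_univ _) h
  set M : ℝ := max 0 ((1 - γ) * p / D + (1 - p)) with hM
  have memM : M ∈ {x : ℝ | ∃ ρ σ : Matrix (Fin D) (Fin D) ℂ, IsDensity ρ ∧ IsDensity σ ∧
      0 < hsDiv γ ρ σ ∧ x = hsDiv γ ((depol D p) ρ) ((depol D p) σ) / hsDiv γ ρ σ} := by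
    refine ⟨ρ₀, σ₀, hρd, hσd, ?_, ?_⟩
    · rw [E0]; exact one_pos
    · rw [E0, Eimg, div_one, hM]
  have bound : ∀ x ∈ {x : ℝ | ∃ ρ σ : Matrix (Fin D) (Fin D) ℂ, IsDensity ρ ∧ IsDensity σ ∧
      0 < hsDiv γ ρ σ ∧ x = hsDiv γ ((depol D p) ρ) ((depol D p) σ) / hsDiv γ ρ σ}, x ≤ M := by
    rintro x ⟨ρ, σ, hρ, hσ, hpos, rfl⟩
    have hE1 := hsDiv_le_one γ hγ hρ hσ
    have him := hsDiv_depol_le D p γ hp0 hp1 hγ ρ σ hρ hσ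
    have him0 : 0 ≤ hsDiv γ ((depol D p) ρ) ((depol D p) σ) := posPartTrace_nonneg _
    rw [div_le_iff₀ hpos]
    set c' : ℝ := (1 - γ) * p / D with hc'
    have hc'0 : c' ≤ 0 := by
      rw [hc']
      have h1 : (1 - γ) * p ≤ 0 := mul_nonpos_of_nonpos_of_nonneg (by linarith) hp0
      exact div_nonpos_of_nonpos_of_nonneg h1 (Nat.cast_nonneg D)
    have hM' : c' + (1 - p) ≤ M := le_max_right _ _
    rcases le_or_gt (c' + (1 - p) * hsDiv γ ρ σ) 0 with h | h
    · have h2 : hsDiv γ ((depol D p) ρ) ((depol D p) σ) ≤ 0 :=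
        him.trans (le_of_eq (max_eq_left h))
      exact le_trans h2 (mul_nonneg (le_max_left _ _) hpos.le)
    · have h2 : hsDiv γ ((depol D p) ρ) ((depol D p) σ) ≤ c' + (1 - p) * hsDiv γ ρ σ :=
        him.trans (le_of_eq (max_eq_right h.le))
      nlinarith [mul_le_mul_of_nonneg_right hM' hpos.le,
        mul_nonneg (neg_nonneg.mpr hc'0) (sub_nonneg.mpr hE1)]
  apply le_antisymm
  · exact Real.sSup_le bound (le_max_left _ _)
  · exact le_csSup ⟨M, fun x hx => bound x hx⟩ memM
end
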